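/- arXiv:2308.09056 — 5 statements merged into one kernel-verified Lean document; each statement's English description precedes it below -/
import Mathlib

section
/- Let G be a subgroup of S_n with ℓ = [S_n : G], and let θ = (θ_1,…,θ_ℓ) be a set of secondary invariants for ℚ[x_1,…,x_n]^G with each θ_j ∈ ℤ[x_1,…,x_n]^G. Then a prime p divides ℧(θ) (the content of det M(θ)) if and only if p is bad for θ, i.e. if and only if 𝔽_p[x_1,…,x_n]^G is NOT equal to the internal direct sum ⊕_{j=1}^ℓ 𝔽_p[x_1,…,x_n]^{S_n}·θ̄_j. -/
open MvPolynomial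

/-- A polynomial is invariant under the subgroup `G` of the symmetric group acting
by permuting the variables. -/
def PermInvariant {n : ℕ} (G : Subgroup (Equiv.Perm (Fin n))) {R : Type*} [CommSemiring R]
    (f : MvPolynomial (Fin n) R) : Prop :=
  ∀ g ∈ G, rename (⇑g) f = f

/-- `θ = (θ_1, …, θ_ℓ)` is a set of secondary invariants for `ℚ[x_1,…,x_n]^G` lying in
`ℤ[x_1,…,x_n]^G`: the `θ_j` are homogeneous `G`-invariant integer polynomials and
`ℚ[x]^G = ⊕_{j=1}^ℓ ℚ[x]^{S_n}·θ_j` (every `G`-invariant rational polynomial has a unique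
expression `Σ_j c_j θ_j` with symmetric coefficients `c_j`). -/
def IsSecondaries {n : ℕ} (G : Subgroup (Equiv.Perm (Fin n))) (ℓ : ℕ)
    (θ : Fin ℓ → MvPolynomial (Fin n) ℤ) : Prop :=
  (∀ j, ∃ d, (θ j).IsHomogeneous d) ∧ (∀ j, PermInvariant G (θ j)) ∧
  ∀ f : MvPolynomial (Fin n) ℚ, PermInvariant G f →
    ∃! c : Fin ℓ → MvPolynomial (Fin n) ℚ,
      (∀ j, (c j).IsSymmetric) ∧ f = ∑ j, c j * map (Int.castRingHom ℚ) (θ j)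

/-- `γ_1, …, γ_ℓ` is a system of representatives of the left cosets of `G` in `S_n`. -/
def IsCosetReps {n : ℕ} (G : Subgroup (Equiv.Perm (Fin n))) (ℓ : ℕ)
    (γ : Fin ℓ → Equiv.Perm (Fin n)) : Prop :=
  ∀ σ : Equiv.Perm (Fin n), ∃! i : Fin ℓ, (γ i)⁻¹ * σ ∈ G

/-- The `ℓ×ℓ` matrix `M(θ)` with `(i,j)` entry `γ_i · θ_j`. -/
noncomputable def secMatrix {n ℓ : ℕ} {R : Type*} [CommSemiring R]
    (γ : Fin ℓ → Equiv.Perm (Fin n)) (θ : Fin ℓ → MvPolynomial (Fin n) R) :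
    Matrix (Fin ℓ) (Fin ℓ) (MvPolynomial (Fin n) R) :=
  Matrix.of fun i j => rename (⇑(γ i)) (θ j)

/-- The content of an integer multivariate polynomial: the gcd of its coefficients. -/
noncomputable def mvContent {n : ℕ} (f : MvPolynomial (Fin n) ℤ) : ℤ :=
  f.support.gcd f.coeff

/-- The prime `p` is *good* for `θ`: `𝔽_p[x]^G = ⊕_{j=1}^ℓ 𝔽_p[x]^{S_n}·θ̄_j`, where
`θ̄_j` is the reduction of `θ_j` mod `p`. -/
def IsGoodPrime {n : ℕ} (G : Subgroup (Equiv.Perm (Fin n))) (ℓ : ℕ)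
    (θ : Fin ℓ → MvPolynomial (Fin n) ℤ) (p : ℕ) : Prop :=
  ∀ f : MvPolynomial (Fin n) (ZMod p), PermInvariant G f →
    ∃! c : Fin ℓ → MvPolynomial (Fin n) (ZMod p),
      (∀ j, (c j).IsSymmetric) ∧ f = ∑ j, c j * map (Int.castRingHom (ZMod p)) (θ j)


variable {n ℓ : ℕ}

-- composition of renames by permutations
theorem rename_perm_mul {R : Type*} [CommSemiring R] (a b : Equiv.Perm (Fin n))
    (f : MvPolynomial (Fin n) R) :
    rename (⇑(a * b)) f = rename ⇑a (rename ⇑b f) := by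
  rw [rename_rename]; rfl

theorem permInvariant_map {G : Subgroup (Equiv.Perm (Fin n))} {R S : Type*} [CommSemiring R]
    [CommSemiring S] (φ : R →+* S) {f : MvPolynomial (Fin n) R} (hf : PermInvariant G f) :
    PermInvariant G (map φ f) := by
  intro g hg; rw [← map_rename, hf g hg]

-- p divides content iff reduction is zero
theorem content_dvd_iff {p : ℕ} (f : MvPolynomial (Fin n) ℤ) :
    (p : ℤ) ∣ mvContent f ↔ map (Int.castRingHom (ZMod p)) f = 0 := by
  constructor
  · intro h
    ext m
    rw [coeff_map, coeff_zero]
    simp only [Int.coe_castRingHom]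
    rw [ZMod.intCast_zmod_eq_zero_iff_dvd]
    by_cases hm : m ∈ f.support
    · exact h.trans (Finset.gcd_dvd hm)
    · simp [MvPolynomial.notMem_support_iff.mp hm]
  · intro h
    refine Finset.dvd_gcd fun m hm => ?_
    have := congrArg (fun q => MvPolynomial.coeff m q) h
    simp only [coeff_map, coeff_zero, Int.coe_castRingHom] at this
    exact (ZMod.intCast_zmod_eq_zero_iff_dvd _ _).mp this

theorem secMatrix_map {R S : Type*} [CommSemiring R] [CommSemiring S] (φ : R →+* S)
    (γ : Fin ℓ → Equiv.Perm (Fin n)) (θ : Fin ℓ → MvPolynomial (Fin n) R) :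
    secMatrix γ (fun j => map φ (θ j)) = (MvPolynomial.map φ).mapMatrix (secMatrix γ θ) := by
  ext i j
  simp [secMatrix, map_rename]

theorem secMatrix_det_map {R S : Type*} [CommRing R] [CommRing S] (φ : R →+* S)
    (γ : Fin ℓ → Equiv.Perm (Fin n)) (θ : Fin ℓ → MvPolynomial (Fin n) R) :
    (secMatrix γ (fun j => map φ (θ j))).det = map φ (secMatrix γ θ).det := by
  rw [secMatrix_map, ← RingHom.map_det]
theorem coeff_rename_perm {R : Type*} [CommSemiring R] (g : Equiv.Perm (Fin n))
    (f : MvPolynomial (Fin n) R) (m : (Fin n) →₀ ℕ) :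
    (rename ⇑g f).coeff m = f.coeff (Finsupp.mapDomain ⇑g⁻¹ m) := by
  have : m = Finsupp.mapDomain ⇑g (Finsupp.mapDomain ⇑g⁻¹ m) := by
    rw [← Finsupp.mapDomain_comp]
    simp only [Function.comp_def, Equiv.Perm.inv_def, Equiv.apply_symm_apply]
    exact (Finsupp.mapDomain_id (v := m)).symm
  conv_lhs => rw [this]
  exact coeff_rename_mapDomain _ g.injective _ _

/-- The coefficientwise lift of a `ZMod p` polynomial to `ℤ`. -/
noncomputable def intLift {p : ℕ} (f : MvPolynomial (Fin n) (ZMod p)) :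
    MvPolynomial (Fin n) ℤ :=
  (AddMonoidAlgebra.coeff f).sum fun m a => monomial m ((a.val : ℤ))

theorem coeff_intLift {p : ℕ} [NeZero p] (f : MvPolynomial (Fin n) (ZMod p)) (m : (Fin n) →₀ ℕ) :
    (intLift f).coeff m = ((f.coeff m).val : ℤ) := by
  classical
  rw [intLift, MvPolynomial.sum_def]
  rw [MvPolynomial.coeff_sum]
  by_cases hm : m ∈ f.support
  · rw [Finset.sum_eq_single m]
    · simp [coeff_monomial]
    · intro b _ hb; simp [coeff_monomial, hb]
    · intro h; exact absurd hm h
  · rw [Finset.sum_eq_zero]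
    · rw [MvPolynomial.notMem_support_iff.mp hm]; simp
    · intro b hb
      have hbm : b ≠ m := fun h => hm (h ▸ hb)
      simp [coeff_monomial, hbm]

theorem map_intLift {p : ℕ} [NeZero p] (f : MvPolynomial (Fin n) (ZMod p)) :
    map (Int.castRingHom (ZMod p)) (intLift f) = f := by
  ext m
  rw [coeff_map, coeff_intLift]
  simp [ZMod.natCast_val, ZMod.cast_id]

theorem permInvariant_intLift {p : ℕ} [NeZero p] {G : Subgroup (Equiv.Perm (Fin n))}
    {f : MvPolynomial (Fin n) (ZMod p)} (hf : PermInvariant G f) :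
    PermInvariant G (intLift f) := by
  intro g hg
  ext m
  rw [coeff_rename_perm, coeff_intLift, coeff_intLift]
  congr 1
  conv_rhs => rw [← hf g hg]
  rw [coeff_rename_perm]
theorem coeff_sum_monomial {R : Type*} [CommSemiring R] (s : Finset ((Fin n) →₀ ℕ))
    (w : ((Fin n) →₀ ℕ) → R) (m : (Fin n) →₀ ℕ) :
    MvPolynomial.coeff m (∑ b ∈ s, monomial b (w b)) = if m ∈ s then w m else 0 := by
  classical
  rw [MvPolynomial.coeff_sum]
  by_cases hm : m ∈ s
  · rw [Finset.sum_eq_single m]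
    · simp [coeff_monomial, hm]
    · intro b _ hb; simp [coeff_monomial, hb]
    · intro h; exact absurd hm h
  · rw [Finset.sum_eq_zero]
    · simp [hm]
    · intro b hb
      have hbm : b ≠ m := fun h => hm (h ▸ hb)
      simp [coeff_monomial, hbm]

/-- Clearing denominators of a rational polynomial. -/
theorem exists_denom (c : MvPolynomial (Fin n) ℚ) :
    ∃ (k : ℕ) (d : MvPolynomial (Fin n) ℤ), 0 < k ∧
      (k : ℤ) • c = map (Int.castRingHom ℚ) d := by
  classical
  set k : ℕ := c.support.prod fun m => (c.coeff m).den with hk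
  have hkpos : 0 < k := Finset.prod_pos fun m _ => (c.coeff m).pos
  have hz : ∀ m ∈ c.support, ∃ z : ℤ, (z : ℚ) = (k : ℚ) * c.coeff m := by
    intro m hm
    obtain ⟨t, ht⟩ := Finset.dvd_prod_of_mem (fun m => (c.coeff m).den) hm
    refine ⟨(c.coeff m).num * t, ?_⟩
    have hden : ((c.coeff m).den : ℚ) ≠ 0 := Nat.cast_ne_zero.mpr (c.coeff m).den_nz
    have hnum : ((c.coeff m).den : ℚ) * c.coeff m = (c.coeff m).num := by
      have h2 : ((c.coeff m).den : ℚ) * c.coeff m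
          = ((c.coeff m).den : ℚ) * (((c.coeff m).num : ℚ) / ((c.coeff m).den : ℚ)) := by
        rw [Rat.num_div_den]
      rw [h2, mul_comm, div_mul_cancel₀ _ hden]
    push_cast [hk, ht]
    rw [mul_comm ((c.coeff m).den : ℚ) (t : ℚ), mul_assoc, hnum, mul_comm]
  choose z hzeq using hz
  refine ⟨k, ∑ m ∈ c.support.attach, monomial m.1 (z m.1 m.2), hkpos, ?_⟩
  ext m
  rw [coeff_map]
  rw [show (∑ b ∈ c.support.attach, monomial b.1 (z b.1 b.2)) =
      ∑ b ∈ c.support, monomial b (if h : b ∈ c.support then z b h else 0) from by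
    rw [← Finset.sum_attach c.support (fun b => monomial b (if h : b ∈ c.support then z b h else 0))]
    exact Finset.sum_congr rfl fun b _ => by simp [b.2]]
  rw [coeff_sum_monomial]
  by_cases hm : m ∈ c.support
  · simp only [hm, dif_pos, if_pos, Int.coe_castRingHom]
    rw [MvPolynomial.coeff_smul, zsmul_eq_mul, Int.cast_natCast, ← hzeq m hm]
  · simp only [hm, if_neg, not_false_iff]
    rw [MvPolynomial.coeff_smul, MvPolynomial.notMem_support_iff.mp hm]
    simp

/-- If the reduction of `d` mod `p` is zero then `d` is `p` times a polynomial. -/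
theorem exists_div_p {p : ℕ} (d : MvPolynomial (Fin n) ℤ)
    (h : map (Int.castRingHom (ZMod p)) d = 0) :
    ∃ d' : MvPolynomial (Fin n) ℤ, d = (p : ℤ) • d' := by
  classical
  have hdvd : ∀ m, (p : ℤ) ∣ d.coeff m := by
    intro m
    have := congrArg (MvPolynomial.coeff m) h
    simpa only [coeff_map, coeff_zero, Int.coe_castRingHom,
      ZMod.intCast_zmod_eq_zero_iff_dvd] using this
  choose z hz using hdvd
  refine ⟨∑ m ∈ d.support, monomial m (z m), ?_⟩
  ext m
  rw [MvPolynomial.coeff_smul, coeff_sum_monomial]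
  by_cases hm : m ∈ d.support
  · simp only [hm, if_pos]
    rw [hz m]; simp [zsmul_eq_mul]
  · simp only [hm, if_neg, not_false_iff]
    rw [MvPolynomial.notMem_support_iff.mp hm]
    simp
theorem map_int_rat_injective :
    Function.Injective (map (Int.castRingHom ℚ) : MvPolynomial (Fin n) ℤ → MvPolynomial (Fin n) ℚ) :=
  MvPolynomial.map_injective _ Int.cast_injective

theorem exists_coprime_denom {p : ℕ} (hp : p.Prime) (e D : MvPolynomial (Fin n) ℤ)
    (he : map (Int.castRingHom (ZMod p)) e ≠ 0) (c : MvPolynomial (Fin n) ℚ)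
    (hc : map (Int.castRingHom ℚ) e * c = map (Int.castRingHom ℚ) D) :
    ∃ (k : ℕ) (d : MvPolynomial (Fin n) ℤ), 0 < k ∧ ¬ p ∣ k ∧
      (k : ℤ) • c = map (Int.castRingHom ℚ) d := by
  classical
  haveI : Fact p.Prime := ⟨hp⟩
  have hex : ∃ k : ℕ, 0 < k ∧ ∃ d, (k : ℤ) • c = map (Int.castRingHom ℚ) d := by
    obtain ⟨k, d, hk, hd⟩ := exists_denom c
    exact ⟨k, hk, d, hd⟩
  obtain ⟨hk₀pos, d, hd⟩ := Nat.find_spec hex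
  refine ⟨Nat.find hex, d, hk₀pos, ?_, hd⟩
  rintro ⟨t, ht⟩
  -- derive the integer identity e * d = k₀ • D
  have hint : e * d = ((Nat.find hex : ℕ) : ℤ) • D := by
    apply map_int_rat_injective
    rw [map_mul, map_zsmul, ← hd, ← hc, mul_smul_comm]
  -- reduce mod p
  have hred : map (Int.castRingHom (ZMod p)) e * map (Int.castRingHom (ZMod p)) d = 0 := by
    have h2 := congrArg (map (Int.castRingHom (ZMod p))) hint
    rw [map_mul, map_zsmul, ht, zsmul_eq_mul] at h2
    rw [h2]
    push_cast
    rw [← MvPolynomial.C_eq_coe_nat, ZMod.natCast_self, map_zero, zero_mul, zero_mul]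
  have hd0 : map (Int.castRingHom (ZMod p)) d = 0 := by
    rcases mul_eq_zero.mp hred with h | h
    · exact absurd h he
    · exact h
  obtain ⟨d', hd'⟩ := exists_div_p d hd0
  -- then t is a smaller denominator
  have htpos : 0 < t := by
    rcases Nat.eq_zero_or_pos t with h | h
    · rw [h, mul_zero] at ht; omega
    · exact h
  have htc : (t : ℤ) • c = map (Int.castRingHom ℚ) d' := by
    have hcancel : (p : ℤ) • ((t : ℤ) • c) = (p : ℤ) • map (Int.castRingHom ℚ) d' := by
      rw [smul_smul, ← Int.natCast_mul, ← ht, hd, hd', map_zsmul]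
    have hpZ : (p : ℤ) ≠ 0 := by exact_mod_cast hp.ne_zero
    exact smul_right_injective _ hpZ hcancel
  have hlt : t < Nat.find hex := by
    have h2 : 2 ≤ p := hp.two_le
    nlinarith [hk₀pos]
  exact Nat.find_min hex hlt ⟨htpos, d', htc⟩
section DetZero

variable {p : ℕ} {G : Subgroup (Equiv.Perm (Fin n))} {γ : Fin ℓ → Equiv.Perm (Fin n)}

/-- If `v` is in the kernel of `M(θ̄)ᵀ`-like system, so is its `τ`-twist. -/
theorem perm_solution {R : Type*} [CommRing R] (hγ : IsCosetReps G ℓ γ)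
    {θ : Fin ℓ → MvPolynomial (Fin n) R} (hinv : ∀ j, PermInvariant G (θ j))
    {v : Fin ℓ → MvPolynomial (Fin n) R} (hv : (secMatrix γ θ).mulVec v = 0)
    (τ : Equiv.Perm (Fin n)) :
    (secMatrix γ θ).mulVec (fun j => rename ⇑τ (v j)) = 0 := by
  funext i
  obtain ⟨i', hi', -⟩ := hγ (τ⁻¹ * γ i)
  set h : Equiv.Perm (Fin n) := (γ i')⁻¹ * (τ⁻¹ * γ i) with hh
  have hgi : γ i = τ * (γ i' * h) := by
    rw [hh]; group
  have hrow : ∀ j, rename ⇑(γ i) (θ j) = rename ⇑τ (rename ⇑(γ i') (θ j)) := by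
    intro j
    rw [hgi, rename_perm_mul, rename_perm_mul, hinv j h hi']
  have hv' := congrFun hv i'
  simp only [Matrix.mulVec, dotProduct, secMatrix, Matrix.of_apply, Pi.zero_apply] at hv' ⊢
  calc ∑ j, rename ⇑(γ i) (θ j) * rename ⇑τ (v j)
      = rename ⇑τ (∑ j, rename ⇑(γ i') (θ j) * v j) := by
        rw [map_sum]
        exact Finset.sum_congr rfl fun j _ => by rw [map_mul, hrow j]
    _ = 0 := by rw [hv', map_zero]

theorem bad_of_det_zero (hp : p.Prime) (θ : Fin ℓ → MvPolynomial (Fin n) ℤ)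
    (hθinv : ∀ j, PermInvariant G (θ j)) (hγ : IsCosetReps G ℓ γ)
    (hdet : (secMatrix γ (fun j => map (Int.castRingHom (ZMod p)) (θ j))).det = 0) :
    ¬ IsGoodPrime G ℓ θ p := by
  classical
  haveI : Fact p.Prime := ⟨hp⟩
  intro hgood
  set θb : Fin ℓ → MvPolynomial (Fin n) (ZMod p) :=
    fun j => map (Int.castRingHom (ZMod p)) (θ j) with hθb
  have hθbinv : ∀ j, PermInvariant G (θb j) := fun j => permInvariant_map _ (hθinv j)
  set M := secMatrix γ θb with hM
  -- a nonzero kernel vector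
  obtain ⟨v0, hv0ne, hv0⟩ := (Matrix.exists_mulVec_eq_zero_iff).mpr hdet
  -- minimize support
  set suppc : (Fin ℓ → MvPolynomial (Fin n) (ZMod p)) → ℕ :=
    fun v => (Finset.univ.filter fun j => v j ≠ 0).card with hsuppc
  have hex : ∃ k, ∃ v, v ≠ 0 ∧ M.mulVec v = 0 ∧ suppc v = k := ⟨suppc v0, v0, hv0ne, hv0, rfl⟩
  obtain ⟨lam, hlamne, hlam, hlamcard⟩ := Nat.find_spec hex
  obtain ⟨j₀, hj₀⟩ : ∃ j₀, lam j₀ ≠ 0 := by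
    by_contra h
    push_neg at h
    exact hlamne (funext fun j => h j)
  -- key relations: τ(λ_{j₀}) * λ_j = λ_{j₀} * τ(λ_j)
  have hrel : ∀ (τ : Equiv.Perm (Fin n)) (j : Fin ℓ),
      rename ⇑τ (lam j₀) * lam j = lam j₀ * rename ⇑τ (lam j) := by
    intro τ j
    set w : Fin ℓ → MvPolynomial (Fin n) (ZMod p) :=
      fun j => rename ⇑τ (lam j₀) * lam j - lam j₀ * rename ⇑τ (lam j) with hw
    have hwsol : M.mulVec w = 0 := by
      have h1 : M.mulVec (fun j => rename ⇑τ (lam j)) = 0 := perm_solution hγ hθbinv hlam τ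
      have : w = (rename ⇑τ (lam j₀)) • lam - (lam j₀) • (fun j => rename ⇑τ (lam j)) := by
        funext j; simp [hw, smul_eq_mul]
      rw [this, Matrix.mulVec_sub, Matrix.mulVec_smul, Matrix.mulVec_smul, hlam, h1,
        smul_zero, smul_zero, sub_zero]
    by_cases hwz : w = 0
    · have := congrFun hwz j
      simpa [hw, sub_eq_zero] using this
    · exfalso
      have hsub : suppc w < Nat.find hex := by
        rw [← hlamcard]
        apply Finset.card_lt_card
        constructor
        · intro j hj
          simp only [Finset.mem_filter, Finset.mem_univ, true_and] at hj ⊢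
          intro hlj
          apply hj
          simp [hw, hlj]
        · intro hsub
          have hj₀mem : j₀ ∈ Finset.univ.filter fun j => lam j ≠ 0 := by
            simp [hj₀]
          have := hsub hj₀mem
          simp only [Finset.mem_filter, Finset.mem_univ, true_and] at this
          apply this
          simp only [hw]
          ring
      exact Nat.find_min hex hsub ⟨w, hwz, hwsol, rfl⟩
  -- the symmetric kernel vector
  set s : MvPolynomial (Fin n) (ZMod p) :=
    ∏ τ ∈ (Finset.univ.erase (1 : Equiv.Perm (Fin n))), rename ⇑τ (lam j₀) with hs
  set c : Fin ℓ → MvPolynomial (Fin n) (ZMod p) := fun j => lam j * s with hc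
  set Q : MvPolynomial (Fin n) (ZMod p) :=
    ∏ τ ∈ (Finset.univ : Finset (Equiv.Perm (Fin n))), rename ⇑τ (lam j₀) with hQ
  have hQs : Q = lam j₀ * s := by
    rw [hQ, hs, ← Finset.mul_prod_erase Finset.univ _ (Finset.mem_univ 1)]
    congr 1
    show rename ⇑(1 : Equiv.Perm (Fin n)) (lam j₀) = lam j₀
    simp [rename_id]
  have hQne : Q ≠ 0 := by
    rw [hQ]
    refine Finset.prod_ne_zero_iff.mpr fun τ _ => ?_
    intro h
    apply hj₀
    have := congrArg (rename ⇑τ⁻¹) h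
    rw [← rename_perm_mul, inv_mul_cancel, map_zero] at this
    simpa [rename_id] using this
  have hlamQ : ∀ j, lam j₀ * c j = lam j * Q := by
    intro j; rw [hc, hQs]; ring
  have hcsym : ∀ j, (c j).IsSymmetric := by
    intro j ρ
    have hρne : rename ⇑ρ (lam j₀) ≠ 0 := fun h => hj₀ <| by
      have := congrArg (rename ⇑ρ⁻¹) h
      rw [← rename_perm_mul, inv_mul_cancel, map_zero] at this
      simpa [rename_id] using this
    have hrQ : rename ⇑ρ Q = Q := by
      rw [hQ, map_prod]
      exact Fintype.prod_equiv (Equiv.mulLeft ρ) _ _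
        fun τ => by rw [show (Equiv.mulLeft ρ) τ = ρ * τ from rfl, rename_perm_mul]
    have h1 : rename ⇑ρ (lam j₀) * rename ⇑ρ (c j) = rename ⇑ρ (lam j) * Q := by
      calc rename ⇑ρ (lam j₀) * rename ⇑ρ (c j)
          = rename ⇑ρ (lam j₀ * c j) := (map_mul _ _ _).symm
        _ = rename ⇑ρ (lam j * Q) := by rw [hlamQ j]
        _ = rename ⇑ρ (lam j) * rename ⇑ρ Q := map_mul _ _ _
        _ = rename ⇑ρ (lam j) * Q := by rw [hrQ]
    have h2 : rename ⇑ρ (lam j₀) * (lam j₀ * rename ⇑ρ (c j))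
        = rename ⇑ρ (lam j₀) * (lam j₀ * c j) := by
      calc rename ⇑ρ (lam j₀) * (lam j₀ * rename ⇑ρ (c j))
          = lam j₀ * (rename ⇑ρ (lam j₀) * rename ⇑ρ (c j)) := by ring
        _ = lam j₀ * (rename ⇑ρ (lam j) * Q) := by rw [h1]
        _ = (lam j₀ * rename ⇑ρ (lam j)) * Q := by ring
        _ = (rename ⇑ρ (lam j₀) * lam j) * Q := by rw [← hrel ρ j]
        _ = rename ⇑ρ (lam j₀) * (lam j * Q) := by ring
        _ = rename ⇑ρ (lam j₀) * (lam j₀ * c j) := by rw [← hlamQ j]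
    exact mul_left_cancel₀ hj₀ (mul_left_cancel₀ hρne h2)
  -- c is a kernel vector
  have hcsol : M.mulVec c = 0 := by
    have hceq : c = s • lam := by
      funext j; simp [hc, smul_eq_mul, mul_comm]
    rw [hceq, Matrix.mulVec_smul, hlam, smul_zero]
  -- the identity coset row gives a relation among the θ̄ⱼ
  obtain ⟨i₀, hi₀, -⟩ := hγ 1
  rw [mul_one] at hi₀
  have hγi₀ : γ i₀ ∈ G := by
    have := G.inv_mem hi₀
    simpa using this
  have hrowzero : ∑ j, c j * θb j = 0 := by
    have h3 := congrFun hcsol i₀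
    simp only [Matrix.mulVec, dotProduct, secMatrix, Matrix.of_apply, Pi.zero_apply,
      hM] at h3
    rw [← h3]
    exact Finset.sum_congr rfl fun j _ => by rw [hθbinv j (γ i₀) hγi₀, mul_comm]
  -- contradiction with uniqueness at 0
  have hzeroinv : PermInvariant G (0 : MvPolynomial (Fin n) (ZMod p)) :=
    fun g _ => map_zero _
  obtain ⟨cu, -, huniq⟩ := hgood 0 hzeroinv
  have h4 : c = cu := huniq c ⟨hcsym, hrowzero.symm⟩
  have h5 : (0 : Fin ℓ → MvPolynomial (Fin n) (ZMod p)) = cu :=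
    huniq 0 ⟨fun j ρ => by simp [IsSymmetric], by simp⟩
  have h6 : c j₀ = 0 := by rw [h4, ← h5]; rfl
  rw [hc] at h6
  exact hQne (hQs.trans h6)

end DetZero
section DetNeZero

variable {p : ℕ} {G : Subgroup (Equiv.Perm (Fin n))} {γ : Fin ℓ → Equiv.Perm (Fin n)}

theorem good_of_det_ne_zero (hp : p.Prime) (θ : Fin ℓ → MvPolynomial (Fin n) ℤ)
    (hθ : IsSecondaries G ℓ θ)
    (hdet : (secMatrix γ (fun j => map (Int.castRingHom (ZMod p)) (θ j))).det ≠ 0) :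
    IsGoodPrime G ℓ θ p := by
  classical
  haveI : Fact p.Prime := ⟨hp⟩
  set θb : Fin ℓ → MvPolynomial (Fin n) (ZMod p) :=
    fun j => map (Int.castRingHom (ZMod p)) (θ j) with hθb
  set M := secMatrix γ θb with hM
  -- uniqueness of the decomposition
  have huniq : ∀ c c' : Fin ℓ → MvPolynomial (Fin n) (ZMod p),
      (∀ j, (c j).IsSymmetric) → (∀ j, (c' j).IsSymmetric) →
      (∑ j, c j * θb j) = (∑ j, c' j * θb j) → c = c' := by
    intro c c' hc hc' hsum
    have hvrel : ∑ j, (c j - c' j) * θb j = 0 := by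
      rw [← sub_eq_zero] at hsum
      rw [← hsum, ← Finset.sum_sub_distrib]
      exact Finset.sum_congr rfl fun j _ => by ring
    have hMv : M.mulVec (fun j => c j - c' j) = 0 := by
      funext i
      simp only [Matrix.mulVec, dotProduct, hM, secMatrix, Matrix.of_apply,
        Pi.zero_apply]
      calc ∑ j, rename ⇑(γ i) (θb j) * (c j - c' j)
          = rename ⇑(γ i) (∑ j, (c j - c' j) * θb j) := by
            rw [map_sum]
            refine Finset.sum_congr rfl fun j _ => ?_
            rw [map_mul, show rename ⇑(γ i) (c j - c' j) = c j - c' j from by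
              rw [map_sub, hc j (γ i), hc' j (γ i)], mul_comm]
        _ = 0 := by rw [hvrel, map_zero]
    have hdetv := congrArg (fun w => M.adjugate.mulVec w) hMv
    simp only [Matrix.mulVec_mulVec, Matrix.adjugate_mul, Matrix.mulVec_zero] at hdetv
    funext j
    have hj := congrFun hdetv j
    simp only [Matrix.smul_mulVec, Matrix.one_mulVec, Pi.smul_apply, smul_eq_mul,
      Pi.zero_apply] at hj
    have := mul_eq_zero.mp hj
    rcases this with h | h
    · exact absurd h hdet
    · exact sub_eq_zero.mp h
  intro f hf
  -- lift f to an invariant integer polynomial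
  set F := intLift f with hFdef
  have hFinv : PermInvariant G F := permInvariant_intLift hf
  have hFmap : map (Int.castRingHom (ZMod p)) F = f := map_intLift f
  have hFQinv : PermInvariant G (map (Int.castRingHom ℚ) F) := permInvariant_map _ hFinv
  obtain ⟨c, ⟨hcsym, hceq⟩, -⟩ := hθ.2.2 (map (Int.castRingHom ℚ) F) hFQinv
  -- Cramer's rule over ℚ
  set e := (secMatrix γ θ).det with he
  set Dv := (secMatrix γ θ).adjugate.mulVec (fun i => rename ⇑(γ i) F) with hDv
  have hemap : map (Int.castRingHom (ZMod p)) e = M.det := by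
    rw [he, hM, hθb, secMatrix_det_map]
  have hcramer : ∀ j, map (Int.castRingHom ℚ) e * c j = map (Int.castRingHom ℚ) (Dv j) := by
    set Mq := secMatrix γ (fun j => map (Int.castRingHom ℚ) (θ j)) with hMq
    have hb : Mq.mulVec c = fun i => rename ⇑(γ i) (map (Int.castRingHom ℚ) F) := by
      funext i
      simp only [Matrix.mulVec, dotProduct, hMq, secMatrix, Matrix.of_apply]
      calc ∑ j, rename ⇑(γ i) (map (Int.castRingHom ℚ) (θ j)) * c j
          = rename ⇑(γ i) (∑ j, c j * map (Int.castRingHom ℚ) (θ j)) := by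
            rw [map_sum]
            refine Finset.sum_congr rfl fun j _ => ?_
            rw [map_mul, hcsym j (γ i), mul_comm]
        _ = rename ⇑(γ i) (map (Int.castRingHom ℚ) F) := by rw [← hceq]
    have hadj := congrArg (fun w => Mq.adjugate.mulVec w) hb
    simp only [Matrix.mulVec_mulVec, Matrix.adjugate_mul, Matrix.smul_mulVec,
      Matrix.one_mulVec] at hadj
    intro j
    have hj := congrFun hadj j
    simp only [Pi.smul_apply, smul_eq_mul] at hj
    have hdetq : Mq.det = map (Int.castRingHom ℚ) e := by
      rw [hMq, he, secMatrix_det_map]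
    have hadjq : Mq.adjugate = (MvPolynomial.map (Int.castRingHom ℚ)).mapMatrix
        ((secMatrix γ θ).adjugate) := by
      rw [hMq, secMatrix_map, RingHom.map_adjugate]
    rw [hdetq] at hj
    rw [hj, hadjq, hDv]
    simp only [Matrix.mulVec, dotProduct, RingHom.mapMatrix_apply, Matrix.map_apply]
    rw [map_sum]
    refine Finset.sum_congr rfl fun i _ => ?_
    rw [map_mul, map_rename]
  -- clear denominators with p-coprime denominators
  have hch : ∀ j, ∃ (k : ℕ) (d : MvPolynomial (Fin n) ℤ), 0 < k ∧ ¬ p ∣ k ∧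
      (k : ℤ) • c j = map (Int.castRingHom ℚ) d :=
    fun j => exists_coprime_denom hp e (Dv j) (hemap ▸ hdet) (c j) (hcramer j)
  choose k d hkpos hknd hkd using hch
  have hkcast : ∀ j, ((k j : ZMod p)) ≠ 0 := by
    intro j h
    exact hknd j ((ZMod.natCast_eq_zero_iff _ _).mp h)
  -- the candidate coefficients mod p
  set cb : Fin ℓ → MvPolynomial (Fin n) (ZMod p) :=
    fun j => ((k j : ZMod p))⁻¹ • map (Int.castRingHom (ZMod p)) (d j) with hcb
  have hdsym : ∀ j (ρ : Equiv.Perm (Fin n)), rename ⇑ρ (d j) = d j := by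
    intro j ρ
    apply map_int_rat_injective
    rw [map_rename, ← hkd j, map_zsmul, hcsym j ρ]
  have hcbsym : ∀ j, (cb j).IsSymmetric := by
    intro j ρ
    rw [hcb]
    simp only
    rw [map_smul, ← map_rename, hdsym j ρ]
  -- the integer identity
  set K : ℕ := ∏ j, k j with hK
  have hKdvd : ∀ j, k j * (K / k j) = K :=
    fun j => Nat.mul_div_cancel' (Finset.dvd_prod_of_mem _ (Finset.mem_univ j))
  have hZ : (K : ℤ) • F = ∑ j, ((K / k j : ℕ) : ℤ) • (d j * θ j) := by
    apply map_int_rat_injective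
    rw [map_zsmul, map_sum, hceq, Finset.smul_sum]
    refine Finset.sum_congr rfl fun j _ => ?_
    rw [map_zsmul, map_mul, ← hkd j, smul_mul_assoc, smul_smul, ← Int.natCast_mul,
      Nat.div_mul_cancel (Finset.dvd_prod_of_mem _ (Finset.mem_univ j))]
  -- reduce mod p
  have hFp : (K : ZMod p) • f = ∑ j, ((K / k j : ℕ) : ZMod p) • (map (Int.castRingHom (ZMod p)) (d j) * θb j) := by
    have h2 := congrArg (map (Int.castRingHom (ZMod p))) hZ
    rw [map_zsmul, map_sum, hFmap] at h2
    rw [show ((K : ℤ) • f) = (K : ZMod p) • f from by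
      rw [natCast_zsmul, ← Nat.cast_smul_eq_nsmul (ZMod p)]] at h2
    rw [h2]
    refine Finset.sum_congr rfl fun j _ => ?_
    rw [map_zsmul, map_mul, natCast_zsmul, ← Nat.cast_smul_eq_nsmul (ZMod p)]
  have hKcast : (K : ZMod p) ≠ 0 := by
    rw [hK, Nat.cast_prod]
    exact Finset.prod_ne_zero_iff.mpr fun j _ => hkcast j
  have hmain : f = ∑ j, cb j * θb j := by
    have hdiv : ∀ j, ((K / k j : ℕ) : ZMod p) = (K : ZMod p) * ((k j : ZMod p))⁻¹ := by
      intro j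
      have : ((k j : ZMod p)) * ((K / k j : ℕ) : ZMod p) = (K : ZMod p) := by
        rw [← Nat.cast_mul, hKdvd j]
      field_simp [hkcast j] at this ⊢
      linear_combination this
    have h3 : (K : ZMod p) • f = (K : ZMod p) • ∑ j, cb j * θb j := by
      rw [hFp, Finset.smul_sum]
      refine Finset.sum_congr rfl fun j _ => ?_
      rw [hdiv j, hcb]
      simp only
      rw [smul_mul_assoc, smul_smul]
    exact smul_right_injective _ hKcast h3
  refine ⟨cb, ⟨hcbsym, hmain⟩, ?_⟩
  intro c' ⟨hc'sym, hc'eq⟩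
  exact huniq c' cb hc'sym hcbsym (hc'eq.symm.trans hmain)

end DetNeZero

/-- A prime `p` divides `℧(θ)` (the content of `det M(θ)`) if and only if
`p` is bad for `θ`. -/
theorem stmt0 {n : ℕ} (G : Subgroup (Equiv.Perm (Fin n))) (ℓ : ℕ) (hℓ : ℓ = G.index)
    (θ : Fin ℓ → MvPolynomial (Fin n) ℤ) (hθ : IsSecondaries G ℓ θ)
    (γ : Fin ℓ → Equiv.Perm (Fin n)) (hγ : IsCosetReps G ℓ γ)
    (p : ℕ) (hp : p.Prime) :
    (p : ℤ) ∣ mvContent (secMatrix γ θ).det ↔ ¬ IsGoodPrime G ℓ θ p := by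
  rw [content_dvd_iff]
  have hkey : map (Int.castRingHom (ZMod p)) (secMatrix γ θ).det
      = (secMatrix γ fun j => map (Int.castRingHom (ZMod p)) (θ j)).det :=
    (secMatrix_det_map _ _ _).symm
  rw [hkey]
  constructor
  · exact fun h => bad_of_det_zero hp θ hθ.2.1 hγ h
  · intro hbad
    by_contra hne
    exact hbad (good_of_det_ne_zero hp θ hθ hne)
end

section
/- Let G be a subgroup of S_n with ℓ = [S_n : G] and let θ = (θ_1,…,θ_ℓ) be a set of secondary invariants for ℚ[x_1,…,x_n]^G with each θ_j ∈ ℤ[x_1,…,x_n]^G. Then the determinant of the ℓ×ℓ matrix M(θ) = (γ_i·θ_j) is a nonzero polynomial in ℤ[x_1,…,x_n]. -/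
open MvPolynomial

lemma apply_le_totalDegree' {n : ℕ} {c : MvPolynomial (Fin n) ℚ} {e : Fin n →₀ ℕ}
    (he : e ∈ c.support) (i : Fin n) : e i ≤ c.totalDegree := by
  refine le_trans ?_ (le_totalDegree he)
  classical
  by_cases h : i ∈ e.support
  · exact Finset.single_le_sum (f := fun j => e j) (fun _ _ => Nat.zero_le _) h
  · simp [Finsupp.notMem_support_iff.1 h]

lemma symmetrize_ne_zero {n : ℕ} (c : MvPolynomial (Fin n) ℚ) (hc : c ≠ 0) :
    ∃ a : Fin n →₀ ℕ,
      (∑ τ : Equiv.Perm (Fin n), rename (⇑τ) (c * monomial a 1)) ≠ 0 := by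
  classical
  set B : ℕ := c.totalDegree + 1 with hB
  have hB0 : 0 < B := Nat.succ_pos _
  set a : Fin n →₀ ℕ := Finsupp.equivFunOnFinite.symm (fun i => B * (i : ℕ)) with ha
  have ha_apply : ∀ i : Fin n, a i = B * (i : ℕ) := fun i => rfl
  obtain ⟨e0, he0⟩ := support_nonempty.2 hc
  refine ⟨a, fun h0 => ?_⟩
  have hcoeff : coeff (e0 + a) (∑ τ : Equiv.Perm (Fin n), rename (⇑τ) (c * monomial a 1))
      = coeff e0 c := by
    rw [coeff_sum]
    rw [Finset.sum_eq_single (1 : Equiv.Perm (Fin n))]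
    · simp only [Equiv.Perm.coe_one, rename_id, AlgHom.id_apply]
      rw [coeff_mul_monomial']
      rw [if_pos le_add_self, add_tsub_cancel_right, mul_one]
    · intro τ _ hτ
      have hm0 : (e0 + a) = Finsupp.mapDomain (⇑τ) (Finsupp.mapDomain (⇑τ⁻¹) (e0 + a)) := by
        rw [← Finsupp.mapDomain_comp]
        have : (⇑τ ∘ ⇑τ⁻¹) = id := by funext x; simp
        rw [this, Finsupp.mapDomain_id]
      rw [hm0, coeff_rename_mapDomain _ (Equiv.injective τ)]
      set d : Fin n →₀ ℕ := Finsupp.mapDomain (⇑τ⁻¹) (e0 + a) with hd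
      have hd_apply : ∀ j : Fin n, d j = (e0 + a) (τ j) := by
        intro j
        have h := Finsupp.mapDomain_apply (Equiv.injective τ⁻¹) (e0 + a) (τ j)
        rw [Equiv.Perm.inv_def, Equiv.symm_apply_apply] at h
        rw [hd]; exact h
      rw [coeff_mul_monomial']
      split_ifs with hle
      · rw [mul_one]
        by_contra hne
        have hmem : d - a ∈ c.support := mem_support_iff.2 hne
        set e : Fin n →₀ ℕ := d - a with he
        have hde : d = e + a := by
          rw [he, tsub_add_cancel_of_le hle]
        -- derive τ = 1
        apply hτ
        ext j
        have hj : e j + a j = e0 (τ j) + a (τ j) := by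
          have := hd_apply j
          rw [hde] at this
          simpa [Finsupp.add_apply] using this
        have hejB : e j < B := Nat.lt_succ_of_le (apply_le_totalDegree' hmem j)
        have he0B : e0 (τ j) < B := Nat.lt_succ_of_le (apply_le_totalDegree' he0 (τ j))
        have hj' : e j + B * (j : ℕ) = e0 (τ j) + B * ((τ j : Fin n) : ℕ) := by
          rw [ha_apply, ha_apply] at hj; omega
        have : (j : ℕ) = ((τ j : Fin n) : ℕ) := by
          have h1 : (e j + B * (j : ℕ)) / B = (j : ℕ) := by
            rw [Nat.add_mul_div_left _ _ hB0, Nat.div_eq_of_lt hejB, Nat.zero_add]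
          have h2 : (e0 (τ j) + B * ((τ j : Fin n) : ℕ)) / B = ((τ j : Fin n) : ℕ) := by
            rw [Nat.add_mul_div_left _ _ hB0, Nat.div_eq_of_lt he0B, Nat.zero_add]
          rw [← h1, hj', h2]
        simp only [Equiv.Perm.coe_one, id_eq]
        exact this.symm
      · rfl
    · intro h; exact absurd (Finset.mem_univ _) h
  rw [h0] at hcoeff
  simp only [coeff_zero] at hcoeff
  exact (mem_support_iff.1 he0) hcoeff.symm

/-- The determinant of the `ℓ×ℓ` matrix `M(θ) = (γ_i·θ_j)` is a nonzero
polynomial in `ℤ[x_1,…,x_n]`. -/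
theorem stmt2 {n : ℕ} (G : Subgroup (Equiv.Perm (Fin n))) (ℓ : ℕ) (hℓ : ℓ = G.index)
    (θ : Fin ℓ → MvPolynomial (Fin n) ℤ) (hθ : IsSecondaries G ℓ θ)
    (γ : Fin ℓ → Equiv.Perm (Fin n)) (hγ : IsCosetReps G ℓ γ) :
    (secMatrix γ θ).det ≠ 0 := by
  classical
  intro hdet
  set f : MvPolynomial (Fin n) ℤ →+* MvPolynomial (Fin n) ℚ := map (Int.castRingHom ℚ) with hf
  set θℚ : Fin ℓ → MvPolynomial (Fin n) ℚ := fun j => f (θ j) with hθℚ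
  -- determinant over ℚ vanishes
  have hmapM : (secMatrix γ θ).map ⇑f = secMatrix γ θℚ := by
    ext i j
    simp [secMatrix, hf, hθℚ, map_rename]
  have hdetQ : (secMatrix γ θℚ).det = 0 := by
    rw [← hmapM, ← RingHom.mapMatrix_apply, ← RingHom.map_det, hdet, map_zero]
  obtain ⟨v, hv, hmul⟩ := Matrix.exists_mulVec_eq_zero_iff.2 hdetQ
  -- the relation for coset representatives
  have hrow : ∀ i, ∑ j, v j * rename (⇑(γ i)) (θℚ j) = 0 := by
    intro i
    have := congrFun hmul i
    simp only [Matrix.mulVec, dotProduct, Pi.zero_apply] at this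
    rw [← this]
    exact Finset.sum_congr rfl fun j _ => by
      rw [mul_comm]; rfl
  -- the relation for every permutation
  have hrel : ∀ σ : Equiv.Perm (Fin n), ∑ j, v j * rename (⇑σ) (θℚ j) = 0 := by
    intro σ
    obtain ⟨i, hiG, -⟩ := hγ σ
    have key : ∀ j, rename (⇑σ) (θℚ j) = rename (⇑(γ i)) (θℚ j) := by
      intro j
      have hinv : rename (⇑((γ i)⁻¹ * σ)) (θℚ j) = θℚ j := by
        have h1 : rename (⇑((γ i)⁻¹ * σ)) (θ j) = θ j := hθ.2.1 j _ hiG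
        have := congrArg f h1
        simpa [hθℚ, hf, map_rename] using this
      have hcoe : ⇑σ = ⇑(γ i) ∘ ⇑((γ i)⁻¹ * σ) := by
        funext x; simp [Equiv.Perm.coe_mul]
      calc rename (⇑σ) (θℚ j)
          = rename (⇑(γ i) ∘ ⇑((γ i)⁻¹ * σ)) (θℚ j) := by rw [hcoe]
        _ = rename (⇑(γ i)) (rename (⇑((γ i)⁻¹ * σ)) (θℚ j)) := (rename_rename _ _ _).symm
        _ = rename (⇑(γ i)) (θℚ j) := by rw [hinv]
    simp_rw [key]
    exact hrow i
  -- rename-twisted relation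
  have hrel' : ∀ τ : Equiv.Perm (Fin n), ∑ j, rename (⇑τ) (v j) * θℚ j = 0 := by
    intro τ
    have := congrArg (rename (⇑τ)) (hrel τ⁻¹)
    rw [map_sum, map_zero] at this
    rw [← this]
    refine Finset.sum_congr rfl fun j _ => ?_
    rw [map_mul]
    congr 1
    rw [rename_rename]
    have : (⇑τ ∘ ⇑τ⁻¹) = id := by funext x; simp
    rw [this, rename_id, AlgHom.id_apply]
  -- choose j0 with v j0 ≠ 0 and the symmetrizing monomial
  obtain ⟨j0, hj0⟩ := Function.ne_iff.1 hv
  obtain ⟨a, hane⟩ := symmetrize_ne_zero (v j0) hj0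
  set d : Fin ℓ → MvPolynomial (Fin n) ℚ :=
    fun j => ∑ τ : Equiv.Perm (Fin n), rename (⇑τ) (v j * monomial a 1) with hdd
  -- d is symmetric
  have hdsym : ∀ j, (d j).IsSymmetric := by
    intro j e
    rw [hdd]
    rw [map_sum]
    have step : ∀ τ : Equiv.Perm (Fin n),
        rename (⇑e) (rename (⇑τ) (v j * monomial a 1))
          = rename (⇑(e * τ)) (v j * monomial a 1) := by
      intro τ
      rw [rename_rename]
      congr 1
    simp_rw [step]
    exact Equiv.sum_comp (Equiv.mulLeft e) (fun τ => rename (⇑τ) (v j * monomial a 1))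
  -- ∑ d j * θℚ j = 0
  have hdzero : ∑ j, d j * θℚ j = 0 := by
    rw [hdd]
    simp_rw [Finset.sum_mul]
    rw [Finset.sum_comm]
    refine Finset.sum_eq_zero fun τ _ => ?_
    have : ∀ j : Fin ℓ, rename (⇑τ) (v j * monomial a 1) * θℚ j
        = rename (⇑τ) (monomial a 1) * (rename (⇑τ) (v j) * θℚ j) := by
      intro j; rw [map_mul]; ring
    simp_rw [this, ← Finset.mul_sum, hrel' τ, mul_zero]
  -- uniqueness forces d = 0
  have h0inv : PermInvariant G (0 : MvPolynomial (Fin n) ℚ) := fun g _ => map_zero _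
  obtain ⟨c₀, -, huniq⟩ := hθ.2.2 0 h0inv
  have hd0 : d = c₀ := huniq d ⟨hdsym, hdzero.symm⟩
  have h00 : (fun _ => 0 : Fin ℓ → MvPolynomial (Fin n) ℚ) = c₀ :=
    huniq _ ⟨fun j e => map_zero _, by simp⟩
  have : d j0 = 0 := by rw [hd0, ← h00]
  exact hane this
end

section
/- Let V = ℂ^n, let Σ ≤ GL(V) be a finite group, let G ≤ Σ with ℓ = [Σ:G], and let 𝒮 = Σ/G be the set of left cosets with its Σ-action. Let ℬ be a single Σ-orbit of reflecting hyperplanes of Σ. Then the number of nonidentity elements of G which fix pointwise some hyperplane in ℬ equals Σ_{P∈ℬ} ( |C_P| · o(P) / ℓ − 1 ), where for P ∈ ℬ, C_P is the subgroup of elements of Σ fixing P pointwise and o(P) is the number of orbits of C_P on 𝒮. -/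
open MvPolynomial

/-- The fixed-point subspace of a linear automorphism `g` of `ℂ^n`. -/
noncomputable def fixedSubspace {n : ℕ} (g : (Fin n → ℂ) ≃ₗ[ℂ] (Fin n → ℂ)) :
    Submodule ℂ (Fin n → ℂ) where
  carrier := {v | g v = v}
  add_mem' := by
    intro a b ha hb
    simp only [Set.mem_setOf_eq] at *
    rw [map_add, ha, hb]
  zero_mem' := by simp
  smul_mem' := by
    intro c v hv
    simp only [Set.mem_setOf_eq] at *
    rw [map_smul, hv]

/-- `g` is a reflection: a nonidentity linear automorphism whose fixed-point subspace is a
hyperplane of `ℂ^n`. -/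
def IsReflection {n : ℕ} (g : (Fin n → ℂ) ≃ₗ[ℂ] (Fin n → ℂ)) : Prop :=
  g ≠ 1 ∧ Module.finrank ℂ (fixedSubspace g) = n - 1

/-- The set of reflecting hyperplanes of a group `Sg` of linear automorphisms of `ℂ^n`. -/
def reflHyperplanes {n : ℕ} (Sg : Subgroup ((Fin n → ℂ) ≃ₗ[ℂ] (Fin n → ℂ))) :
    Set (Submodule ℂ (Fin n → ℂ)) :=
  {P | ∃ g ∈ Sg, IsReflection g ∧ fixedSubspace g = P}

/-- The subgroup `C_P` of elements of `Sg` fixing `P` pointwise. -/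
noncomputable def pointwiseStab {n : ℕ} (Sg : Subgroup ((Fin n → ℂ) ≃ₗ[ℂ] (Fin n → ℂ)))
    (P : Submodule ℂ (Fin n → ℂ)) : Subgroup ↥Sg where
  carrier := {g | ∀ v ∈ P, (g : (Fin n → ℂ) ≃ₗ[ℂ] (Fin n → ℂ)) v = v}
  one_mem' := by
    intro v hv
    rfl
  mul_mem' := by
    intro a b ha hb v hv
    have : (↑(a * b) : (Fin n → ℂ) ≃ₗ[ℂ] (Fin n → ℂ)) v
        = (a : (Fin n → ℂ) ≃ₗ[ℂ] (Fin n → ℂ)) ((b : (Fin n → ℂ) ≃ₗ[ℂ] (Fin n → ℂ)) v) := rfl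
    rw [this, hb v hv, ha v hv]
  inv_mem' := by
    intro a ha v hv
    have h1 : (a : (Fin n → ℂ) ≃ₗ[ℂ] (Fin n → ℂ)) v = v := ha v hv
    have : (↑(a⁻¹) : (Fin n → ℂ) ≃ₗ[ℂ] (Fin n → ℂ)) v
        = ((a : (Fin n → ℂ) ≃ₗ[ℂ] (Fin n → ℂ)).symm) v := rfl
    rw [this]
    conv_lhs => rw [← h1]
    exact (a : (Fin n → ℂ) ≃ₗ[ℂ] (Fin n → ℂ)).symm_apply_apply v

/-- The number of orbits of `C_P` acting on the set `𝒮 = Sg/G` of left cosets of `G`. -/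
noncomputable def numOrbits {n : ℕ} (Sg G : Subgroup ((Fin n → ℂ) ≃ₗ[ℂ] (Fin n → ℂ)))
    (P : Submodule ℂ (Fin n → ℂ)) : ℕ :=
  Nat.card (MulAction.orbitRel.Quotient ↥(pointwiseStab Sg P) (↥Sg ⧸ G.subgroupOf Sg))

/-- `ℬ` is a `Sg`-orbit of reflecting hyperplanes of `Sg`. -/
def IsHyperplaneOrbit {n : ℕ} (Sg : Subgroup ((Fin n → ℂ) ≃ₗ[ℂ] (Fin n → ℂ)))
    (ℬ : Set (Submodule ℂ (Fin n → ℂ))) : Prop :=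
  ℬ.Nonempty ∧ ℬ ⊆ reflHyperplanes Sg ∧
  (∀ P ∈ ℬ, ∀ σ ∈ Sg, P.map (σ : (Fin n → ℂ) ≃ₗ[ℂ] (Fin n → ℂ)).toLinearMap ∈ ℬ) ∧
  ∀ P ∈ ℬ, ∀ Q ∈ ℬ, ∃ σ ∈ Sg, P.map (σ : (Fin n → ℂ) ≃ₗ[ℂ] (Fin n → ℂ)).toLinearMap = Q

section Stmt7Aux

variable {n : ℕ}

lemma mem_fixedSubspace {g : (Fin n → ℂ) ≃ₗ[ℂ] (Fin n → ℂ)} {v : Fin n → ℂ} :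
    v ∈ fixedSubspace g ↔ g v = v := Iff.rfl

lemma stmt7_eq_one_of_forall_fixed {g : (Fin n → ℂ) ≃ₗ[ℂ] (Fin n → ℂ)}
    (h : ∀ v, g v = v) : g = 1 :=
  LinearEquiv.ext fun v => h v

lemma fixedSubspace_ne_top {g : (Fin n → ℂ) ≃ₗ[ℂ] (Fin n → ℂ)} (hg : g ≠ 1) :
    fixedSubspace g ≠ ⊤ := by
  intro h
  exact hg (stmt7_eq_one_of_forall_fixed fun v =>
    mem_fixedSubspace.1 (h.ge (Submodule.mem_top (x := v))))

lemma fixedSubspace_conj (σ g : (Fin n → ℂ) ≃ₗ[ℂ] (Fin n → ℂ)) :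
    fixedSubspace (σ * g * σ⁻¹) = (fixedSubspace g).map σ.toLinearMap := by
  ext v
  rw [mem_fixedSubspace, Submodule.mem_map_equiv]
  have h1 : (σ * g * σ⁻¹) v = σ (g (σ.symm v)) := rfl
  rw [h1, mem_fixedSubspace]
  constructor
  · intro h
    conv_rhs => rw [← h]
    rw [σ.symm_apply_apply]
  · intro h
    rw [h, σ.apply_symm_apply]

lemma fixedSubspace_eq_of_le {g : (Fin n → ℂ) ≃ₗ[ℂ] (Fin n → ℂ)} (hg : g ≠ 1)
    {P : Submodule ℂ (Fin n → ℂ)} (hdim : Module.finrank ℂ P = n - 1)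
    (hfix : ∀ v ∈ P, g v = v) : fixedSubspace g = P := by
  have hle : P ≤ fixedSubspace g := fun v hv => hfix v hv
  have hlt : Module.finrank ℂ (fixedSubspace g) < n := by
    have := Submodule.finrank_lt (K := ℂ) (V := Fin n → ℂ) (s := fixedSubspace g)
      (fixedSubspace_ne_top hg)
    simpa [Module.finrank_fin_fun] using this
  exact (Submodule.eq_of_le_of_finrank_le hle (by omega)).symm

lemma finrank_of_mem_reflHyperplanes {Sg : Subgroup ((Fin n → ℂ) ≃ₗ[ℂ] (Fin n → ℂ))}
    {P : Submodule ℂ (Fin n → ℂ)} (h : P ∈ reflHyperplanes Sg) :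
    Module.finrank ℂ P = n - 1 := by
  obtain ⟨g, _, ⟨_, hdim⟩, rfl⟩ := h
  exact hdim

lemma mem_pointwiseStab_iff {Sg : Subgroup ((Fin n → ℂ) ≃ₗ[ℂ] (Fin n → ℂ))}
    {P : Submodule ℂ (Fin n → ℂ)} {c : ↥Sg} :
    c ∈ pointwiseStab Sg P ↔ ∀ v ∈ P, (c : (Fin n → ℂ) ≃ₗ[ℂ] (Fin n → ℂ)) v = v := Iff.rfl

end Stmt7Aux

set_option maxHeartbeats 1600000 in
/-- For a `Σ`-orbit `ℬ` of reflecting hyperplanes, the number of nonidentity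
elements of `G` which fix pointwise some hyperplane in `ℬ` equals
`Σ_{P∈ℬ} (|C_P|·o(P)/ℓ − 1)`, where `o(P)` is the number of orbits of `C_P` on `𝒮 = Σ/G`. -/
theorem stmt7 {n : ℕ} (Sg G : Subgroup ((Fin n → ℂ) ≃ₗ[ℂ] (Fin n → ℂ)))
    (hfin : Finite ↥Sg) (hG : G ≤ Sg) (ℓ : ℕ) (hℓ : ℓ = (G.subgroupOf Sg).index)
    (ℬ : Set (Submodule ℂ (Fin n → ℂ))) (hℬ : IsHyperplaneOrbit Sg ℬ) :
    (Nat.card {g : (Fin n → ℂ) ≃ₗ[ℂ] (Fin n → ℂ) //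
        g ∈ G ∧ g ≠ 1 ∧ ∃ P ∈ ℬ, ∀ v ∈ P, g v = v} : ℚ) =
      ∑ᶠ P ∈ ℬ, ((Nat.card ↥(pointwiseStab Sg P) : ℚ) * (numOrbits Sg G P : ℚ) / ℓ - 1) := by
  classical
  haveI := hfin
  haveI : Fintype ↥Sg := Fintype.ofFinite _
  obtain ⟨hBne, hBrefl, hBclosed, hBtrans⟩ := hℬ
  set E := (Fin n → ℂ) ≃ₗ[ℂ] (Fin n → ℂ) with hE
  set G' := G.subgroupOf Sg with hG'def
  haveI : Fintype (↥Sg ⧸ G') := Fintype.ofFinite _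
  obtain ⟨P₀, hP₀⟩ := hBne
  have hBfin : ℬ.Finite := by
    apply Set.Finite.subset (Set.finite_range
      (fun σ : ↥Sg => Submodule.map ((σ : E)).toLinearMap P₀))
    intro Q hQ
    obtain ⟨σ, hσ, h⟩ := hBtrans P₀ hP₀ Q hQ
    exact ⟨⟨σ, hσ⟩, h⟩
  -- Burnside's lemma for each P ∈ ℬ
  have hBurn : ∀ P ∈ ℬ, Nat.card ↥(pointwiseStab Sg P) * numOrbits Sg G P
      = ∑ c ∈ (Set.toFinite ((pointwiseStab Sg P : Set ↥Sg))).toFinset,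
          Nat.card (MulAction.fixedBy (↥Sg ⧸ G') c) := by
    intro P hP
    haveI : Fintype ↥(pointwiseStab Sg P) := Fintype.ofFinite _
    haveI : ∀ a : ↥(pointwiseStab Sg P), Fintype (MulAction.fixedBy (↥Sg ⧸ G') a) :=
      fun a => Fintype.ofFinite _
    haveI : Fintype (MulAction.orbitRel.Quotient ↥(pointwiseStab Sg P) (↥Sg ⧸ G')) :=
      Fintype.ofFinite _
    have h := MulAction.sum_card_fixedBy_eq_card_orbits_mul_card_group
      (G := ↥(pointwiseStab Sg P)) (X := ↥Sg ⧸ G')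
    have e1 : numOrbits Sg G P
        = Fintype.card (MulAction.orbitRel.Quotient ↥(pointwiseStab Sg P) (↥Sg ⧸ G')) :=
      Nat.card_eq_fintype_card
    calc Nat.card ↥(pointwiseStab Sg P) * numOrbits Sg G P
        = Fintype.card (MulAction.orbitRel.Quotient ↥(pointwiseStab Sg P) (↥Sg ⧸ G'))
            * Fintype.card ↥(pointwiseStab Sg P) := by
          rw [e1, Nat.card_eq_fintype_card, mul_comm]
      _ = ∑ a : ↥(pointwiseStab Sg P), Fintype.card (MulAction.fixedBy (↥Sg ⧸ G') a) := h.symm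
      _ = ∑ a : ↥(pointwiseStab Sg P),
            Nat.card (MulAction.fixedBy (↥Sg ⧸ G') (a : ↥Sg)) := by
          exact Finset.sum_congr rfl fun a _ => (Nat.card_eq_fintype_card).symm
      _ = ∑ c ∈ (Set.toFinite ((pointwiseStab Sg P : Set ↥Sg))).toFinset,
            Nat.card (MulAction.fixedBy (↥Sg ⧸ G') c) := by
          exact (Finset.sum_subtype (p := fun c => c ∈ pointwiseStab Sg P) _
            (fun x => Set.Finite.mem_toFinset _)
            (fun c => Nat.card (MulAction.fixedBy (↥Sg ⧸ G') c))).symm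
  -- the fixed points of 1 are everything
  have hF1 : Nat.card (MulAction.fixedBy (↥Sg ⧸ G') (1 : ↥Sg)) = ℓ := by
    have huniv : MulAction.fixedBy (↥Sg ⧸ G') (1 : ↥Sg) = Set.univ := by
      ext x
      simp [MulAction.mem_fixedBy]
    rw [huniv, hℓ, Subgroup.index_eq_card]
    exact Nat.card_congr (Equiv.Set.univ _)
  -- regrouping the double sum
  have hregroup : ∑ c ∈ Finset.univ.filter
        (fun c : ↥Sg => ((c : E) ≠ 1 ∧ fixedSubspace (c : E) ∈ ℬ)),
        Nat.card (MulAction.fixedBy (↥Sg ⧸ G') c)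
      = ∑ P ∈ hBfin.toFinset,
          ∑ c ∈ ((Set.toFinite ((pointwiseStab Sg P : Set ↥Sg))).toFinset).erase 1,
            Nat.card (MulAction.fixedBy (↥Sg ⧸ G') c) := by
    have hmap : ∀ c ∈ Finset.univ.filter
        (fun c : ↥Sg => ((c : E) ≠ 1 ∧ fixedSubspace (c : E) ∈ ℬ)),
        fixedSubspace (c : E) ∈ hBfin.toFinset := by
      intro c hc
      exact hBfin.mem_toFinset.2 (Finset.mem_filter.1 hc).2.2
    rw [← Finset.sum_fiberwise_of_maps_to hmap
      (fun c => Nat.card (MulAction.fixedBy (↥Sg ⧸ G') c))]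
    refine Finset.sum_congr rfl fun P hP' => ?_
    have hPB : P ∈ ℬ := hBfin.mem_toFinset.1 hP'
    refine Finset.sum_congr ?_ fun _ _ => rfl
    ext c
    simp only [Finset.mem_filter, Finset.mem_univ, true_and, Finset.mem_erase,
      Set.Finite.mem_toFinset]
    constructor
    · rintro ⟨⟨h1, _⟩, h3⟩
      refine ⟨fun hc => h1 ?_, ?_⟩
      · rw [hc]; rfl
      · show c ∈ pointwiseStab Sg P
        rw [mem_pointwiseStab_iff]
        intro v hv
        exact mem_fixedSubspace.1 (h3 ▸ hv)
    · rintro ⟨h1, h2⟩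
      have hfix := mem_pointwiseStab_iff.1 h2
      have hc1 : (c : E) ≠ 1 := by
        intro h
        exact h1 (Subtype.ext (h.trans (OneMemClass.coe_one _).symm))
      have heq : fixedSubspace (c : E) = P :=
        fixedSubspace_eq_of_le hc1 (finrank_of_mem_reflHyperplanes (hBrefl hPB)) hfix
      exact ⟨⟨hc1, heq ▸ hPB⟩, heq⟩
  -- counting fixed points via the preimage in Sg
  have hfib : ∀ c : ↥Sg, Nat.card (MulAction.fixedBy (↥Sg ⧸ G') c) * Nat.card ↥G'
      = Nat.card {σ : ↥Sg // σ⁻¹ * c * σ ∈ G'} := by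
    intro c
    have e1 := QuotientGroup.preimageMkEquivSubgroupProdSet G'
      (MulAction.fixedBy (↥Sg ⧸ G') c)
    have e2 : {σ : ↥Sg // σ⁻¹ * c * σ ∈ G'}
        ≃ ↥(QuotientGroup.mk ⁻¹' (MulAction.fixedBy (↥Sg ⧸ G') c)) := by
      apply Equiv.subtypeEquivRight
      intro σ
      show σ⁻¹ * c * σ ∈ G' ↔ σ ∈ QuotientGroup.mk ⁻¹' (MulAction.fixedBy (↥Sg ⧸ G') c)
      rw [Set.mem_preimage, MulAction.mem_fixedBy, MulAction.Quotient.smul_mk, smul_eq_mul,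
        QuotientGroup.eq, show (c * σ)⁻¹ * σ = (σ⁻¹ * c * σ)⁻¹ by group, inv_mem_iff]
    rw [Nat.card_congr e2, Nat.card_congr e1, Nat.card_prod, mul_comm]
  -- the main double counting
  have hcount : ∑ c ∈ Finset.univ.filter
        (fun c : ↥Sg => ((c : E) ≠ 1 ∧ fixedSubspace (c : E) ∈ ℬ)),
        Nat.card {σ : ↥Sg // σ⁻¹ * c * σ ∈ G'}
      = Nat.card {g : E // g ∈ G ∧ g ≠ 1 ∧ ∃ P ∈ ℬ, ∀ v ∈ P, g v = v} * Nat.card ↥Sg := by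
    -- conjugation facts
    have hconj : ∀ (τ c : ↥Sg), fixedSubspace ((τ * c * τ⁻¹ : ↥Sg) : E)
        = Submodule.map ((τ : E)).toLinearMap (fixedSubspace (c : E)) :=
      fun τ c => fixedSubspace_conj (τ : E) (c : E)
    have hne1 : ∀ c : ↥Sg, (c : E) ≠ 1 → ∀ τ : ↥Sg, ((τ * c * τ⁻¹ : ↥Sg) : E) ≠ 1 := by
      intro c hc τ h
      apply hc
      have h2 : τ * c * τ⁻¹ = (1 : ↥Sg) :=
        Subtype.ext (h.trans (OneMemClass.coe_one _).symm)
      rw [conj_eq_one_iff.mp h2]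
      rfl
    have hmemB : ∀ g : E, g ≠ 1 → (∃ P ∈ ℬ, ∀ v ∈ P, g v = v) → fixedSubspace g ∈ ℬ := by
      rintro g hg1 ⟨P, hPB, hfix⟩
      rw [fixedSubspace_eq_of_le hg1 (finrank_of_mem_reflHyperplanes (hBrefl hPB)) hfix]
      exact hPB
    -- forward membership data
    have fwd : ∀ (w : {p : ↥Sg × ↥Sg //
        (((p.1 : E)) ≠ 1 ∧ fixedSubspace ((p.1 : E)) ∈ ℬ) ∧ p.2⁻¹ * p.1 * p.2 ∈ G'}),
        ((w.1.2⁻¹ * w.1.1 * w.1.2 : ↥Sg) : E) ∈ G ∧ ((w.1.2⁻¹ * w.1.1 * w.1.2 : ↥Sg) : E) ≠ 1 ∧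
          ∃ P ∈ ℬ, ∀ v ∈ P, ((w.1.2⁻¹ * w.1.1 * w.1.2 : ↥Sg) : E) v = v := by
      rintro ⟨⟨c, σ⟩, ⟨hc1, hcB⟩, hσ⟩
      refine ⟨(Subgroup.mem_subgroupOf).1 hσ, ?_, ?_⟩
      · have h := hne1 c hc1 σ⁻¹
        rwa [inv_inv] at h
      · refine ⟨fixedSubspace (((σ⁻¹ * c * σ : ↥Sg)) : E), ?_, fun v hv => hv⟩
        have h := hconj σ⁻¹ c
        rw [inv_inv] at h
        rw [h]
        exact hBclosed _ hcB _ (SetLike.coe_mem σ⁻¹)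
    -- backward membership data
    have bwd : ∀ (u : {g : E // g ∈ G ∧ g ≠ 1 ∧ ∃ P ∈ ℬ, ∀ v ∈ P, g v = v} × ↥Sg),
        ((((u.2 * ⟨↑u.1, hG u.1.2.1⟩ * u.2⁻¹ : ↥Sg) : E)) ≠ 1 ∧
          fixedSubspace (((u.2 * ⟨↑u.1, hG u.1.2.1⟩ * u.2⁻¹ : ↥Sg) : E)) ∈ ℬ) ∧
          u.2⁻¹ * (u.2 * ⟨↑u.1, hG u.1.2.1⟩ * u.2⁻¹) * u.2 ∈ G' := by
      rintro ⟨⟨g, hgG, hg1, hgfix⟩, σ⟩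
      refine ⟨⟨hne1 ⟨g, hG hgG⟩ hg1 σ, ?_⟩, ?_⟩
      · rw [hconj σ ⟨g, hG hgG⟩]
        exact hBclosed _ (hmemB g hg1 hgfix) _ (SetLike.coe_mem σ)
      · have h : σ⁻¹ * (σ * ⟨g, hG hgG⟩ * σ⁻¹) * σ = (⟨g, hG hgG⟩ : ↥Sg) := by group
        rw [h]
        exact (Subgroup.mem_subgroupOf).2 hgG
    -- the double-counting bijection
    have hWe : {p : ↥Sg × ↥Sg //
        (((p.1 : E)) ≠ 1 ∧ fixedSubspace ((p.1 : E)) ∈ ℬ) ∧ p.2⁻¹ * p.1 * p.2 ∈ G'}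
        ≃ {g : E // g ∈ G ∧ g ≠ 1 ∧ ∃ P ∈ ℬ, ∀ v ∈ P, g v = v} × ↥Sg :=
      { toFun := fun w => (⟨_, fwd w⟩, w.1.2)
        invFun := fun u => ⟨(u.2 * ⟨↑u.1, hG u.1.2.1⟩ * u.2⁻¹, u.2), bwd u⟩
        left_inv := by
          rintro ⟨⟨c, σ⟩, h⟩
          apply Subtype.ext
          refine Prod.ext ?_ rfl
          apply Subtype.ext
          show (σ : E) * ((σ : E)⁻¹ * (c : E) * (σ : E)) * (σ : E)⁻¹ = (c : E)
          group
        right_inv := by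
          rintro ⟨⟨g, hgG, hg1, hgfix⟩, σ⟩
          refine Prod.ext ?_ rfl
          apply Subtype.ext
          show (σ : E)⁻¹ * ((σ : E) * g * (σ : E)⁻¹) * (σ : E) = g
          group }
    -- turning the sum into a count of the product type
    have hsum2 : ∑ c ∈ Finset.univ.filter
          (fun c : ↥Sg => ((c : E) ≠ 1 ∧ fixedSubspace (c : E) ∈ ℬ)),
          Nat.card {σ : ↥Sg // σ⁻¹ * c * σ ∈ G'}
        = ∑ c : ↥Sg, Nat.card {σ : ↥Sg //
            (((c : E)) ≠ 1 ∧ fixedSubspace ((c : E)) ∈ ℬ) ∧ σ⁻¹ * c * σ ∈ G'} := by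
      rw [Finset.sum_filter]
      refine Finset.sum_congr rfl fun c _ => ?_
      by_cases hq : ((c : E) ≠ 1 ∧ fixedSubspace (c : E) ∈ ℬ)
      · rw [if_pos hq]
        exact Nat.card_congr (Equiv.subtypeEquivRight fun σ => (and_iff_right hq).symm)
      · rw [if_neg hq]
        haveI : IsEmpty {σ : ↥Sg //
            (((c : E)) ≠ 1 ∧ fixedSubspace ((c : E)) ∈ ℬ) ∧ σ⁻¹ * c * σ ∈ G'} :=
          ⟨fun σ => hq σ.2.1⟩
        exact (Nat.card_of_isEmpty).symm
    have hsig : ∑ c : ↥Sg, Nat.card {σ : ↥Sg //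
          (((c : E)) ≠ 1 ∧ fixedSubspace ((c : E)) ∈ ℬ) ∧ σ⁻¹ * c * σ ∈ G'}
        = Nat.card {p : ↥Sg × ↥Sg //
            (((p.1 : E)) ≠ 1 ∧ fixedSubspace ((p.1 : E)) ∈ ℬ) ∧ p.2⁻¹ * p.1 * p.2 ∈ G'} := by
      haveI : ∀ c : ↥Sg, Fintype {σ : ↥Sg //
          (((c : E)) ≠ 1 ∧ fixedSubspace ((c : E)) ∈ ℬ) ∧ σ⁻¹ * c * σ ∈ G'} :=
        fun c => Fintype.ofFinite _
      rw [Nat.card_congr (Equiv.subtypeProdEquivSigmaSubtype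
        (fun (c σ : ↥Sg) => (((c : E)) ≠ 1 ∧ fixedSubspace ((c : E)) ∈ ℬ) ∧ σ⁻¹ * c * σ ∈ G')),
        Nat.card_eq_fintype_card, Fintype.card_sigma]
      exact Finset.sum_congr rfl fun c _ => Nat.card_eq_fintype_card
    rw [hsum2, hsig, Nat.card_congr hWe, Nat.card_prod]
  -- deduce the natural number identity
  have hG'card : ℓ * Nat.card ↥G' = Nat.card ↥Sg := by
    rw [hℓ]
    exact Subgroup.index_mul_card (G := ↥Sg) (H := G')
  have hG'pos : 0 < Nat.card ↥G' := Nat.card_pos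
  have hsum : ∑ c ∈ Finset.univ.filter
        (fun c : ↥Sg => ((c : E) ≠ 1 ∧ fixedSubspace (c : E) ∈ ℬ)),
        Nat.card (MulAction.fixedBy (↥Sg ⧸ G') c)
      = Nat.card {g : E // g ∈ G ∧ g ≠ 1 ∧ ∃ P ∈ ℬ, ∀ v ∈ P, g v = v} * ℓ := by
    apply Nat.eq_of_mul_eq_mul_right hG'pos
    rw [Finset.sum_mul]
    calc ∑ c ∈ _, Nat.card (MulAction.fixedBy (↥Sg ⧸ G') c) * Nat.card ↥G'
        = ∑ c ∈ Finset.univ.filter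
            (fun c : ↥Sg => ((c : E) ≠ 1 ∧ fixedSubspace (c : E) ∈ ℬ)),
            Nat.card {σ : ↥Sg // σ⁻¹ * c * σ ∈ G'} := by
          exact Finset.sum_congr rfl fun c _ => hfib c
      _ = Nat.card {g : E // g ∈ G ∧ g ≠ 1 ∧ ∃ P ∈ ℬ, ∀ v ∈ P, g v = v} * Nat.card ↥Sg := hcount
      _ = Nat.card {g : E // g ∈ G ∧ g ≠ 1 ∧ ∃ P ∈ ℬ, ∀ v ∈ P, g v = v} * ℓ * Nat.card ↥G' := by
          rw [mul_assoc, hG'card]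
  -- positivity of ℓ
  have hℓpos : (0 : ℚ) < ℓ := by
    have : G'.index ≠ 0 := Subgroup.index_ne_zero_of_finite
    rw [hℓ]
    exact_mod_cast Nat.pos_of_ne_zero this
  have hℓne : (ℓ : ℚ) ≠ 0 := ne_of_gt hℓpos
  -- final assembly
  have hfs : ∑ᶠ P ∈ ℬ, ((Nat.card ↥(pointwiseStab Sg P) : ℚ) * (numOrbits Sg G P : ℚ) / ℓ - 1)
      = ∑ P ∈ hBfin.toFinset,
          ((Nat.card ↥(pointwiseStab Sg P) : ℚ) * (numOrbits Sg G P : ℚ) / ℓ - 1) := by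
    have h := finsum_mem_coe_finset (s := hBfin.toFinset)
      (f := fun P => ((Nat.card ↥(pointwiseStab Sg P) : ℚ) * (numOrbits Sg G P : ℚ) / ℓ - 1))
    rw [hBfin.coe_toFinset] at h
    exact h
  refine Eq.trans ?_ hfs.symm
  have hterm : ∀ P ∈ hBfin.toFinset,
      ((Nat.card ↥(pointwiseStab Sg P) : ℚ) * (numOrbits Sg G P : ℚ) / ℓ - 1)
      = (∑ c ∈ ((Set.toFinite ((pointwiseStab Sg P : Set ↥Sg))).toFinset).erase 1,
          (Nat.card (MulAction.fixedBy (↥Sg ⧸ G') c) : ℚ)) / ℓ := by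
    intro P hPB'
    have hPB : P ∈ ℬ := hBfin.mem_toFinset.1 hPB'
    have h1 := hBurn P hPB
    have h2 := Finset.add_sum_erase _ (fun c => Nat.card (MulAction.fixedBy (↥Sg ⧸ G') c))
      ((Set.Finite.mem_toFinset (Set.toFinite ((pointwiseStab Sg P : Set ↥Sg)))).2
        (one_mem (pointwiseStab Sg P)))
    rw [← h2] at h1
    simp only [hF1] at h1
    have h3 : (Nat.card ↥(pointwiseStab Sg P) : ℚ) * (numOrbits Sg G P : ℚ)
        = (ℓ : ℚ) + ∑ c ∈ ((Set.toFinite ((pointwiseStab Sg P : Set ↥Sg))).toFinset).erase 1,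
            (Nat.card (MulAction.fixedBy (↥Sg ⧸ G') c) : ℚ) := by
      exact_mod_cast congrArg (Nat.cast : ℕ → ℚ) h1
    rw [h3, add_div, div_self hℓne]
    ring
  rw [Finset.sum_congr rfl hterm, ← Finset.sum_div]
  have hq : (∑ P ∈ hBfin.toFinset,
        ∑ c ∈ ((Set.toFinite ((pointwiseStab Sg P : Set ↥Sg))).toFinset).erase 1,
          (Nat.card (MulAction.fixedBy (↥Sg ⧸ G') c) : ℚ))
      = (Nat.card {g : E // g ∈ G ∧ g ≠ 1 ∧ ∃ P ∈ ℬ, ∀ v ∈ P, g v = v} : ℚ) * ℓ := by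
    exact_mod_cast congrArg (Nat.cast (R := ℚ)) (hregroup.symm.trans hsum)
  rw [hq, mul_div_assoc, div_self hℓne, mul_one]
end

section
/- Let n ≥ 2. In ℤ[x_1,…,x_n], let m = ∏_{i=1}^{n−1} x_i^{n−i} and m' = x_n · ∏_{i=1}^{n−2} x_i^{n−i}, and let Z(m), Z(m') denote their A_n-orbit sums (sums of the distinct monomials in the A_n-orbit). Then Z(m') − Z(m) = −∏_{1≤i<j≤n} (x_i − x_j). -/
open MvPolynomial

/-- The submodule of `G`-invariant polynomials in `R[x_1,…,x_n]`. -/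
def invariantSubmodule {n : ℕ} (G : Subgroup (Equiv.Perm (Fin n))) (R : Type*)
    [CommSemiring R] : Submodule R (MvPolynomial (Fin n) R) where
  carrier := {f | PermInvariant G f}
  add_mem' := by
    intro a b ha hb g hg
    rw [map_add, ha g hg, hb g hg]
  zero_mem' := by
    intro g hg
    simp
  smul_mem' := by
    intro c f hf g hg
    rw [smul_eq_C_mul, map_mul, rename_C, hf g hg]

/-- The `G`-orbit of the exponent vector `e`, as a finite set. -/
noncomputable def expOrbit {n : ℕ} (G : Subgroup (Equiv.Perm (Fin n)))
    (e : Fin n →₀ ℕ) : Finset (Fin n →₀ ℕ) :=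
  ((Set.toFinite (G : Set (Equiv.Perm (Fin n)))).image
    (fun g : Equiv.Perm (Fin n) => Finsupp.mapDomain (⇑g) e)).toFinset

/-- The `G`-orbit sum `Z(m)` of the monomial with exponent vector `e`: the sum of the
distinct monomials in the `G`-orbit of `m`. -/
noncomputable def orbitSum {n : ℕ} (G : Subgroup (Equiv.Perm (Fin n))) (R : Type*)
    [CommSemiring R] (e : Fin n →₀ ℕ) : MvPolynomial (Fin n) R :=
  ∑ e' ∈ expOrbit G e, monomial e' 1


open Finset Equiv

section aux

variable {n : ℕ} {R : Type*} [CommSemiring R]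

lemma injPerm {e : Fin n →₀ ℕ} (he : Function.Injective ⇑e) :
    Function.Injective (fun σ : Perm (Fin n) => Finsupp.mapDomain ⇑σ e) := by
  intro σ τ h
  have h2 : ∀ a, e (σ.symm a) = e (τ.symm a) := by
    intro a
    have := DFunLike.congr_fun h a
    rwa [Finsupp.mapDomain_equiv_apply, Finsupp.mapDomain_equiv_apply] at this
  have h3 : σ.symm = τ.symm := Equiv.ext fun a => he (h2 a)
  rw [← σ.symm_symm, h3, τ.symm_symm]

lemma monPerm (s : Fin n →₀ ℕ) (σ : Perm (Fin n)) :
    (monomial (Finsupp.mapDomain ⇑σ s) (1:R)) = ∏ i : Fin n, X (σ i) ^ s i := by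
  have monFull : ∀ u : Fin n →₀ ℕ, (monomial u (1:R)) = ∏ i : Fin n, X i ^ u i := by
    intro u
    rw [← prod_X_pow_eq_monomial]
    apply Finset.prod_subset (Finset.subset_univ _)
    intro x _ hx
    simp only [Finsupp.mem_support_iff, not_not] at hx
    simp [hx]
  rw [monFull]
  rw [← Equiv.prod_comp σ (fun j => X j ^ (Finsupp.mapDomain ⇑σ s) j)]
  apply Finset.prod_congr rfl
  intro i _
  rw [Finsupp.mapDomain_equiv_apply, Equiv.symm_apply_apply]

lemma orbitSumEqAlt {e : Fin n →₀ ℕ} (he : Function.Injective ⇑e) :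
    orbitSum (alternatingGroup (Fin n)) R e =
      ∑ σ ∈ Finset.univ.filter (fun σ : Perm (Fin n) => Perm.sign σ = 1),
        monomial (Finsupp.mapDomain ⇑σ e) (1:R) := by
  have hset : expOrbit (alternatingGroup (Fin n)) e =
      Finset.image (fun σ : Perm (Fin n) => Finsupp.mapDomain ⇑σ e)
        (Finset.univ.filter (fun σ : Perm (Fin n) => Perm.sign σ = 1)) := by
    ext x
    simp [expOrbit, Set.Finite.mem_toFinset, Set.mem_image, Finset.mem_image,
      Equiv.Perm.mem_alternatingGroup]
  rw [orbitSum, hset, Finset.sum_image (fun a _ b _ h => injPerm he h)]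

end aux

lemma D_eq (n : ℕ) :
    ∑ σ : Perm (Fin n), Perm.sign σ • ∏ i : Fin n,
        (X (σ i) : MvPolynomial (Fin n) ℤ) ^ (n - 1 - (i:ℕ)) =
    ∏ q ∈ Finset.univ.filter (fun q : Fin n × Fin n => q.1 < q.2), (X q.1 - X q.2) := by
  classical
  set ρ : Perm (Fin n) := Fin.revPerm with hρdef
  have hρ : ∀ σ : Perm (Fin n),
      Perm.sign (ρ * σ * ρ) • ∏ i : Fin n,
        (X ((ρ * σ * ρ : Perm (Fin n)) i) : MvPolynomial (Fin n) ℤ) ^ (n - 1 - (i:ℕ)) =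
      Perm.sign σ • ∏ i : Fin n, (X ((σ i).rev) : MvPolynomial (Fin n) ℤ) ^ (i:ℕ) := by
    intro σ
    have hsign : Perm.sign (ρ * σ * ρ) = Perm.sign σ := by
      simp only [map_mul]
      rw [mul_comm (Perm.sign ρ), mul_assoc, Int.units_mul_self, mul_one]
    rw [hsign]
    congr 1
    rw [← Equiv.prod_comp ρ
      (fun i => (X ((ρ * σ * ρ : Perm (Fin n)) i) : MvPolynomial (Fin n) ℤ) ^ (n - 1 - (i:ℕ)))]
    apply Finset.prod_congr rfl
    intro i _
    have h1 : (ρ * σ * ρ : Perm (Fin n)) (ρ i) = (σ i).rev := by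
      simp [hρdef, Equiv.Perm.mul_apply]
    have h2 : n - 1 - ((ρ i : Fin n) : ℕ) = (i : ℕ) := by
      have := Fin.val_rev i
      have hi := i.isLt
      simp only [hρdef, Fin.revPerm_apply]
      omega
    rw [h1, h2]
  have hconj := Equiv.sum_comp ((Equiv.mulLeft ρ).trans (Equiv.mulRight ρ))
    (fun σ : Perm (Fin n) =>
      Perm.sign σ • ∏ i : Fin n, (X (σ i) : MvPolynomial (Fin n) ℤ) ^ (n - 1 - (i:ℕ)))
  rw [← hconj]
  simp only [Equiv.trans_apply, Equiv.coe_mulLeft, Equiv.coe_mulRight]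
  simp only [hρ]
  have hdet : ∑ σ : Perm (Fin n), Perm.sign σ • ∏ i : Fin n,
      (X ((σ i).rev) : MvPolynomial (Fin n) ℤ) ^ (i:ℕ) =
      (Matrix.vandermonde (fun i : Fin n => (X i.rev : MvPolynomial (Fin n) ℤ))).det := by
    rw [Matrix.det_apply]
    simp [Matrix.vandermonde_apply]
  rw [hdet, Matrix.det_vandermonde]
  rw [Finset.prod_sigma']
  refine Finset.prod_nbij' (fun p => (p.2.rev, p.1.rev)) (fun q => ⟨q.2.rev, q.1.rev⟩)
    ?_ ?_ ?_ ?_ ?_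
  · rintro ⟨i, j⟩ h
    simp only [Finset.mem_sigma, Finset.mem_Ioi] at h
    simp [Fin.rev_lt_rev, h.2]
  · rintro ⟨a, b⟩ h
    simp only [Finset.mem_filter] at h
    simp [Fin.rev_lt_rev, h.2]
  · rintro ⟨i, j⟩ _; simp
  · rintro ⟨a, b⟩ _; simp
  · rintro ⟨i, j⟩ _; simp

/-- For `n ≥ 2`, with `m = ∏_{i=1}^{n−1} x_i^{n−i}` and
`m' = x_n·∏_{i=1}^{n−2} x_i^{n−i}`, the `A_n`-orbit sums satisfy
`Z(m') − Z(m) = −∏_{1≤i<j≤n}(x_i − x_j)` in `ℤ[x_1,…,x_n]`. -/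
theorem stmt16 (n : ℕ) (hn : 2 ≤ n) :
    orbitSum (alternatingGroup (Fin n)) ℤ
        (Finsupp.equivFunOnFinite.symm fun i : Fin n =>
          if (i : ℕ) = n - 1 then 1 else if (i : ℕ) = n - 2 then 0 else n - 1 - (i : ℕ)) -
      orbitSum (alternatingGroup (Fin n)) ℤ
        (Finsupp.equivFunOnFinite.symm fun i : Fin n => n - 1 - (i : ℕ)) =
    -∏ q ∈ Finset.univ.filter (fun q : Fin n × Fin n => q.1 < q.2), (X q.1 - X q.2) := by


  classical
  set e : Fin n →₀ ℕ := Finsupp.equivFunOnFinite.symm fun i : Fin n => n - 1 - (i : ℕ) with hedef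
  have heval : ∀ i : Fin n, e i = n - 1 - (i : ℕ) := fun i => rfl
  have he : Function.Injective ⇑e := by
    intro i j h
    rw [heval, heval] at h
    have hi := i.isLt; have hj := j.isLt
    exact Fin.ext (by omega)
  set a : Fin n := ⟨n - 2, by omega⟩ with hadef
  set b : Fin n := ⟨n - 1, by omega⟩ with hbdef
  have hab : a ≠ b := by
    intro h
    have := congrArg Fin.val h
    simp [hadef, hbdef] at this
    omega
  set t : Perm (Fin n) := Equiv.swap a b with htdef
  have hsignt : Perm.sign t = -1 := Equiv.Perm.sign_swap hab
  -- the primed exponent vector is `mapDomain t e`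
  have he' : (Finsupp.equivFunOnFinite.symm fun i : Fin n =>
      if (i : ℕ) = n - 1 then 1 else if (i : ℕ) = n - 2 then 0 else n - 1 - (i : ℕ)) =
      Finsupp.mapDomain ⇑t e := by
    ext i
    rw [Finsupp.mapDomain_equiv_apply]
    have hsymm : t.symm = Equiv.swap a b := by rw [htdef, Equiv.symm_swap]
    rw [hsymm]
    show (if (i : ℕ) = n - 1 then 1 else if (i : ℕ) = n - 2 then 0 else n - 1 - (i : ℕ))
      = e (Equiv.swap a b i)
    have ha' : ((a : Fin n) : ℕ) = n - 2 := rfl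
    have hb' : ((b : Fin n) : ℕ) = n - 1 := rfl
    by_cases hib : i = b
    · subst hib
      rw [Equiv.swap_apply_right, heval]
      rw [hb', ha']
      split_ifs <;> omega
    · by_cases hia : i = a
      · subst hia
        rw [Equiv.swap_apply_left, heval]
        rw [ha', hb']
        split_ifs <;> omega
      · rw [Equiv.swap_apply_of_ne_of_ne hia hib, heval]
        have h1 : (i : ℕ) ≠ n - 1 := by
          intro h; exact hib (Fin.ext (h.trans hb'.symm))
        have h2 : (i : ℕ) ≠ n - 2 := by
          intro h; exact hia (Fin.ext (h.trans ha'.symm))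
        rw [if_neg h1, if_neg h2]
  have he2 : Function.Injective ⇑(Finsupp.mapDomain ⇑t e) := by
    have hco : ⇑(Finsupp.mapDomain ⇑t e) = ⇑e ∘ ⇑t.symm :=
      funext fun i => Finsupp.mapDomain_equiv_apply e i
    rw [hco]
    exact he.comp t.symm.injective
  rw [he', orbitSumEqAlt he, orbitSumEqAlt he2]
  set F : Perm (Fin n) → MvPolynomial (Fin n) ℤ :=
    fun σ => monomial (Finsupp.mapDomain ⇑σ e) 1 with hFdef
  have htt : t * t = 1 := Equiv.swap_mul_self a b
  have h2 : ∑ σ ∈ Finset.univ.filter (fun σ : Perm (Fin n) => Perm.sign σ = 1),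
      monomial (Finsupp.mapDomain ⇑σ (Finsupp.mapDomain ⇑t e)) (1:ℤ) =
      ∑ τ ∈ Finset.univ.filter (fun σ : Perm (Fin n) => Perm.sign σ = -1), F τ := by
    have hcomp : ∀ σ : Perm (Fin n),
        Finsupp.mapDomain ⇑σ (Finsupp.mapDomain ⇑t e) = Finsupp.mapDomain ⇑(σ * t) e := by
      intro σ
      rw [Equiv.Perm.coe_mul, Finsupp.mapDomain_comp]
    refine Finset.sum_nbij' (fun σ => σ * t) (fun τ => τ * t) ?_ ?_ ?_ ?_ ?_
    · intro σ hσ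
      simp only [Finset.mem_filter, Finset.mem_univ, true_and] at hσ ⊢
      rw [map_mul, hσ, hsignt, one_mul]
    · intro τ hτ
      simp only [Finset.mem_filter, Finset.mem_univ, true_and] at hτ ⊢
      rw [map_mul, hτ, hsignt]
      decide
    · intro σ _; show σ * t * t = σ; rw [mul_assoc, htt, mul_one]
    · intro τ _; show τ * t * t = τ; rw [mul_assoc, htt, mul_one]
    · intro σ _
      rw [hcomp, hFdef]
  rw [h2]
  have h3 : ∑ σ : Perm (Fin n), Perm.sign σ • F σ =
      ∏ q ∈ Finset.univ.filter (fun q : Fin n × Fin n => q.1 < q.2), (X q.1 - X q.2) := by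
    rw [← D_eq n]
    apply Finset.sum_congr rfl
    intro σ _
    congr 1
    simp only [hFdef]
    rw [monPerm]
    exact Finset.prod_congr rfl fun i _ => by rw [heval]
  have h4 : ∑ σ : Perm (Fin n), Perm.sign σ • F σ =
      (∑ σ ∈ Finset.univ.filter (fun σ : Perm (Fin n) => Perm.sign σ = 1), F σ) -
      (∑ τ ∈ Finset.univ.filter (fun σ : Perm (Fin n) => Perm.sign σ = -1), F τ) := by
    rw [← Finset.sum_filter_add_sum_filter_not Finset.univ
      (fun σ : Perm (Fin n) => Perm.sign σ = 1) (fun σ => Perm.sign σ • F σ)]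
    have hfe : Finset.univ.filter (fun σ : Perm (Fin n) => ¬ Perm.sign σ = 1) =
        Finset.univ.filter (fun σ : Perm (Fin n) => Perm.sign σ = -1) := by
      apply Finset.filter_congr
      intro σ _
      rcases Int.units_eq_one_or (Perm.sign σ) with h | h <;> simp [h]
    have hA : ∀ σ ∈ Finset.univ.filter (fun σ : Perm (Fin n) => Perm.sign σ = 1),
        Perm.sign σ • F σ = F σ := by
      intro σ hσ
      rw [(Finset.mem_filter.mp hσ).2, one_smul]
    have hB : ∀ σ ∈ Finset.univ.filter (fun σ : Perm (Fin n) => Perm.sign σ = -1),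
        Perm.sign σ • F σ = -F σ := by
      intro σ hσ
      rw [(Finset.mem_filter.mp hσ).2, Units.smul_def]
      norm_num
    rw [hfe, Finset.sum_congr rfl hA, Finset.sum_congr rfl hB, Finset.sum_neg_distrib]
    ring
  rw [h4] at h3
  linear_combination -h3
end

section
/- Let n ≥ 2, let m = ∏_{i=1}^{n−1} x_i^{n−i}, and let Z(m) ∈ ℤ[x_1,…,x_n]^{A_n} be its A_n-orbit sum. Then for every prime p, 𝔽_p[x_1,…,x_n]^{A_n} = 𝔽_p[x_1,…,x_n]^{S_n} ⊕ 𝔽_p[x_1,…,x_n]^{S_n} · Z(m)‾, where Z(m)‾ is the reduction of Z(m) modulo p; in particular 𝔽_p[x_1,…,x_n]^{A_n} is a free 𝔽_p[x_1,…,x_n]^{S_n}-module of rank 2 (hence Cohen-Macaulay) for every prime p. -/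
open MvPolynomial

namespace Stmt17

variable {n : ℕ}

lemma mem_expOrbit {G : Subgroup (Equiv.Perm (Fin n))} {e v : Fin n →₀ ℕ} :
    v ∈ expOrbit G e ↔ ∃ g ∈ G, Finsupp.mapDomain (⇑g) e = v := by
  simp only [expOrbit, Set.Finite.mem_toFinset, Set.mem_image, SetLike.mem_coe]

lemma self_mem_expOrbit {G : Subgroup (Equiv.Perm (Fin n))} (e : Fin n →₀ ℕ) :
    e ∈ expOrbit G e :=
  mem_expOrbit.2 ⟨1, G.one_mem, by simp [Finsupp.mapDomain_id]⟩

lemma mapDomain_mapDomain (g h : Equiv.Perm (Fin n)) (e : Fin n →₀ ℕ) :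
    Finsupp.mapDomain (⇑g) (Finsupp.mapDomain (⇑h) e) = Finsupp.mapDomain (⇑(g * h)) e := by
  rw [← Finsupp.mapDomain_comp]; rfl

lemma mapDomain_mem_expOrbit {G : Subgroup (Equiv.Perm (Fin n))} {e v : Fin n →₀ ℕ}
    (hv : v ∈ expOrbit G e) {g : Equiv.Perm (Fin n)} (hg : g ∈ G) :
    Finsupp.mapDomain (⇑g) v ∈ expOrbit G e := by
  obtain ⟨h, hh, rfl⟩ := mem_expOrbit.1 hv
  exact mem_expOrbit.2 ⟨g * h, G.mul_mem hg hh, (mapDomain_mapDomain g h e).symm⟩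

lemma expOrbit_map_eq {G : Subgroup (Equiv.Perm (Fin n))} (e : Fin n →₀ ℕ)
    {g : Equiv.Perm (Fin n)} (hg : g ∈ G) :
    (expOrbit G e).image (Finsupp.mapDomain (⇑g)) = expOrbit G e := by
  apply Finset.Subset.antisymm
  · intro v hv
    obtain ⟨w, hw, rfl⟩ := Finset.mem_image.1 hv
    exact mapDomain_mem_expOrbit hw hg
  · intro v hv
    refine Finset.mem_image.2 ⟨Finsupp.mapDomain (⇑g⁻¹) v, mapDomain_mem_expOrbit hv (G.inv_mem hg), ?_⟩
    rw [mapDomain_mapDomain, mul_inv_cancel, Equiv.Perm.coe_one, Finsupp.mapDomain_id]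

lemma rename_orbitSum {G : Subgroup (Equiv.Perm (Fin n))} (R : Type*) [CommSemiring R]
    (e : Fin n →₀ ℕ) {g : Equiv.Perm (Fin n)} (hg : g ∈ G) :
    rename (⇑g) (orbitSum G R e) = orbitSum G R e := by
  simp only [orbitSum, map_sum, rename_monomial]
  refine Finset.sum_bij' (fun e' _ => Finsupp.mapDomain (⇑g) e')
    (fun e' _ => Finsupp.mapDomain (⇑g⁻¹) e') (fun a ha => mapDomain_mem_expOrbit ha hg)
    (fun a ha => mapDomain_mem_expOrbit ha (G.inv_mem hg)) ?_ ?_ ?_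
  · intro a _
    show Finsupp.mapDomain _ (Finsupp.mapDomain _ _) = _
    rw [mapDomain_mapDomain, inv_mul_cancel, Equiv.Perm.coe_one, Finsupp.mapDomain_id]
  · intro a _
    show Finsupp.mapDomain _ (Finsupp.mapDomain _ _) = _
    rw [mapDomain_mapDomain, mul_inv_cancel, Equiv.Perm.coe_one, Finsupp.mapDomain_id]
  · intro a _
    rfl

lemma orbitSum_invariant {G : Subgroup (Equiv.Perm (Fin n))} (R : Type*) [CommSemiring R]
    (e : Fin n →₀ ℕ) : PermInvariant G (orbitSum G R e) :=
  fun _ hg => rename_orbitSum R e hg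

lemma orbitSum_top_symmetric (R : Type*) [CommSemiring R] (e : Fin n →₀ ℕ) :
    (orbitSum ⊤ R e).IsSymmetric :=
  fun g => rename_orbitSum R e (Subgroup.mem_top g)

lemma coeff_orbitSum {G : Subgroup (Equiv.Perm (Fin n))} (R : Type*) [CommSemiring R]
    (e v : Fin n →₀ ℕ) :
    coeff v (orbitSum G R e) = if v ∈ expOrbit G e then 1 else 0 := by
  rw [orbitSum]
  simp_rw [coeff_sum, coeff_monomial]
  rw [Finset.sum_ite_eq' (expOrbit G e) v (fun _ => (1:R))]

lemma map_orbitSum {G : Subgroup (Equiv.Perm (Fin n))} {R S : Type*} [CommSemiring R]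
    [CommSemiring S] (φ : R →+* S) (e : Fin n →₀ ℕ) :
    map φ (orbitSum G R e) = orbitSum G S e := by
  rw [orbitSum, map_sum, orbitSum]
  simp_rw [map_monomial, map_one]

lemma coeff_invariant {G : Subgroup (Equiv.Perm (Fin n))} {R : Type*} [CommSemiring R]
    {f : MvPolynomial (Fin n) R} (hf : PermInvariant G f) {g : Equiv.Perm (Fin n)}
    (hg : g ∈ G) (e : Fin n →₀ ℕ) :
    coeff (Finsupp.mapDomain (⇑g) e) f = coeff e f := by
  conv_lhs => rw [← hf g hg]
  exact coeff_rename_mapDomain (⇑g) (Equiv.injective g) f e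

lemma support_invariant {G : Subgroup (Equiv.Perm (Fin n))} {R : Type*} [CommSemiring R]
    {f : MvPolynomial (Fin n) R} (hf : PermInvariant G f) {g : Equiv.Perm (Fin n)}
    (hg : g ∈ G) {e : Fin n →₀ ℕ} (he : e ∈ f.support) :
    Finsupp.mapDomain (⇑g) e ∈ f.support := by
  rw [mem_support_iff] at he ⊢
  rwa [coeff_invariant hf hg]


lemma mapDomain_perm_apply (g : Equiv.Perm (Fin n)) (v : Fin n →₀ ℕ) (a : Fin n) :
    Finsupp.mapDomain (⇑g) v a = v (g⁻¹ a) := by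
  conv_lhs => rw [show a = g (g⁻¹ a) by simp]
  exact Finsupp.mapDomain_apply (Equiv.injective g) v (g⁻¹ a)

/-- The permutation such that `v ∘ sortPerm v` is antitone. -/
noncomputable def sortPerm (v : Fin n →₀ ℕ) : Equiv.Perm (Fin n) :=
  Fin.revPerm.trans (Tuple.sort (⇑v))

/-- The decreasing rearrangement of `v`. -/
noncomputable def sortF (v : Fin n →₀ ℕ) : Fin n →₀ ℕ :=
  Finsupp.equivFunOnFinite.symm (⇑v ∘ ⇑(sortPerm v))

lemma sortF_apply (v : Fin n →₀ ℕ) : ⇑(sortF v) = ⇑v ∘ ⇑(sortPerm v) := by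
  ext a
  simp [sortF]

lemma antitone_sortF (v : Fin n →₀ ℕ) : Antitone ⇑(sortF v) := by
  rw [sortF_apply]
  intro a b hab
  have h1 : Monotone (⇑v ∘ ⇑(Tuple.sort ⇑v)) := Tuple.monotone_sort (⇑v)
  have h2 : (⇑v ∘ ⇑(sortPerm v)) = (⇑v ∘ ⇑(Tuple.sort ⇑v)) ∘ Fin.rev := rfl
  rw [h2]
  exact h1 (by rwa [Fin.rev_le_rev])

lemma sortF_eq_mapDomain (v : Fin n →₀ ℕ) :
    sortF v = Finsupp.mapDomain (⇑(sortPerm v)⁻¹) v := by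
  ext a
  rw [mapDomain_perm_apply, inv_inv, sortF_apply]
  rfl

lemma antitone_rearrangement_unique {a b : Fin n → ℕ} (ha : Antitone a) (hb : Antitone b)
    (g : Equiv.Perm (Fin n)) (h : a = b ∘ ⇑g) : a = b := by
  have key : ∀ z, b (⇑(Fin.revPerm.trans g) z) = a (Fin.rev z) := by
    intro z
    rw [h]
    rfl
  have h1 : Monotone (b ∘ ⇑(Fin.revPerm.trans g)) := by
    intro x y hxy
    show b (⇑(Fin.revPerm.trans g) x) ≤ b (⇑(Fin.revPerm.trans g) y)
    rw [key, key]
    exact ha (Fin.rev_le_rev.2 hxy)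
  have h2 : Monotone (b ∘ ⇑(Fin.revPerm : Equiv.Perm (Fin n))) := by
    intro x y hxy
    exact hb (Fin.rev_le_rev.2 hxy)
  have heq := Tuple.unique_monotone h1 h2
  funext x
  rw [h]
  show b (g x) = b x
  have := congrFun heq (Fin.rev x)
  simpa [Fin.rev_rev] using this

lemma sortF_eq_of_antitone {v w : Fin n →₀ ℕ} (hw : Antitone ⇑w)
    (g : Equiv.Perm (Fin n)) (h : v = Finsupp.mapDomain (⇑g) w) : sortF v = w := by
  have hfun : ⇑(sortF v) = ⇑w ∘ ⇑((sortPerm v).trans g⁻¹) := by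
    rw [sortF_apply]
    funext a
    simp only [Function.comp_apply, Equiv.trans_apply]
    rw [h, mapDomain_perm_apply]
  have := antitone_rearrangement_unique (antitone_sortF v) hw _ hfun
  exact DFunLike.coe_injective this

lemma sortF_antitone_self {w : Fin n →₀ ℕ} (hw : Antitone ⇑w) : sortF w = w :=
  sortF_eq_of_antitone hw 1 (by simp [Finsupp.mapDomain_id])

lemma sortF_mapDomain (v : Fin n →₀ ℕ) (g : Equiv.Perm (Fin n)) :
    sortF (Finsupp.mapDomain (⇑g) v) = sortF v := by
  apply sortF_eq_of_antitone (antitone_sortF v) (g * sortPerm v)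
  rw [sortF_eq_mapDomain, mapDomain_mapDomain]
  have : g * sortPerm v * (sortPerm v)⁻¹ = g := by group
  rw [this]

lemma sortF_mem_orbit_top (v : Fin n →₀ ℕ) :
    sortF v ∈ expOrbit (⊤ : Subgroup (Equiv.Perm (Fin n))) v := by
  rw [sortF_eq_mapDomain]
  exact mem_expOrbit.2 ⟨(sortPerm v)⁻¹, Subgroup.mem_top _, rfl⟩

lemma sortF_eq_iff_orbit {v w : Fin n →₀ ℕ} :
    sortF v = sortF w ↔ ∃ g : Equiv.Perm (Fin n), v = Finsupp.mapDomain (⇑g) w := by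
  constructor
  · intro h
    refine ⟨(sortPerm v) * (sortPerm w)⁻¹, ?_⟩
    rw [← mapDomain_mapDomain, ← sortF_eq_mapDomain, ← h, sortF_eq_mapDomain,
      mapDomain_mapDomain, mul_inv_cancel, Equiv.Perm.coe_one, Finsupp.mapDomain_id]
  · rintro ⟨g, rfl⟩
    exact sortF_mapDomain w g

/-- The sorted vector is the lex-largest element of the orbit. -/
lemma lex_le_sorted {w : Fin n →₀ ℕ} (hw : Antitone ⇑w) (g : Equiv.Perm (Fin n)) :
    toLex (Finsupp.mapDomain (⇑g) w) ≤ toLex w := by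
  set u := Finsupp.mapDomain (⇑g) w with hu
  by_contra hlt
  push_neg at hlt
  obtain ⟨i, hprefix, hi⟩ := (Finsupp.lex_def).1 hlt
  set c := u i with hc
  have hS1 : ∀ k : Fin n, c ≤ w k → k < i := by
    intro k hk
    by_contra hki
    push_neg at hki
    exact absurd (le_trans hk (hw hki)) (not_le.2 hi)
  classical
  set S1 : Finset (Fin n) := Finset.univ.filter (fun k => c ≤ w k) with hS1def
  set S2 : Finset (Fin n) := Finset.univ.filter (fun j => c ≤ u j) with hS2def
  have hcard1 : S2.card ≤ S1.card := by
    apply Finset.card_le_card_of_injOn (fun j => g⁻¹ j)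
    · intro j hj
      simp only [hS2def, Finset.coe_filter, Set.mem_setOf_eq, Finset.mem_univ, true_and] at hj
      simp only [hS1def, Finset.coe_filter, Set.mem_setOf_eq, Finset.mem_univ, true_and]
      simp only [hu, mapDomain_perm_apply] at hj; exact hj
    · intro a _ b _ hab
      exact (Equiv.injective g⁻¹) hab
  have hins : insert i S1 ⊆ S2 := by
    intro k hk
    rcases Finset.mem_insert.1 hk with rfl | hk
    · simp [hS2def, hc]
    · simp only [hS1def, Finset.mem_filter, Finset.mem_univ, true_and] at hk
      simp only [hS2def, Finset.mem_filter, Finset.mem_univ, true_and]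
      exact le_of_le_of_eq hk (hprefix k (hS1 k hk))
  have hiS1 : i ∉ S1 := by
    simp only [hS1def, Finset.mem_filter, Finset.mem_univ, true_and]
    exact fun h => absurd h (not_le.2 hi)
  have := Finset.card_le_card hins
  rw [Finset.card_insert_of_notMem hiS1] at this
  omega

lemma lex_lt_sorted {w u : Fin n →₀ ℕ} (hw : Antitone ⇑w) (g : Equiv.Perm (Fin n))
    (h : u = Finsupp.mapDomain (⇑g) w) (hne : u ≠ w) : toLex u < toLex w :=
  lt_of_le_of_ne (h ▸ lex_le_sorted hw g) (fun hh => hne (toLex.injective hh))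

lemma lex_le_sortF (v : Fin n →₀ ℕ) : toLex v ≤ toLex (sortF v) := by
  conv_lhs => rw [show v = Finsupp.mapDomain (⇑(sortPerm v)) (sortF v) by
    rw [sortF_eq_mapDomain, mapDomain_mapDomain, mul_inv_cancel, Equiv.Perm.coe_one,
      Finsupp.mapDomain_id]]
  exact lex_le_sorted (antitone_sortF v) _

section TopSum

open Finset

/-- `topSum k v` is the maximum of `∑_{i ∈ S} v i` over `k`-element subsets `S`. -/
noncomputable def topSum (k : ℕ) (v : Fin n →₀ ℕ) : ℕ :=
  (Finset.univ.powersetCard k).sup (fun S => ∑ i ∈ S, v i)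

lemma topSum_add_le (k : ℕ) (a b : Fin n →₀ ℕ) :
    topSum k (a + b) ≤ topSum k a + topSum k b := by
  show (Finset.univ.powersetCard k).sup (fun S => ∑ i ∈ S, (a + b) i) ≤ _
  apply Finset.sup_le
  intro S hS
  have heq : ∑ i ∈ S, (a + b) i = (∑ i ∈ S, a i) + ∑ i ∈ S, b i := by
    rw [← Finset.sum_add_distrib]
    exact Finset.sum_congr rfl (fun i _ => Finsupp.add_apply a b i)
  rw [heq]
  exact Nat.add_le_add (Finset.le_sup (f := fun S => ∑ i ∈ S, a i) hS)
    (Finset.le_sup (f := fun S => ∑ i ∈ S, b i) hS)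

lemma strictMono_fin_le {k : ℕ} (f : Fin k → Fin n) (hf : StrictMono f) (j : Fin k) :
    (j : ℕ) ≤ (f j : ℕ) := by
  obtain ⟨jv, hjv⟩ := j
  induction jv with
  | zero => exact Nat.zero_le _
  | succ m ih =>
    have hm : m < k := Nat.lt_of_succ_lt hjv
    have h1 := ih hm
    have h2 : f ⟨m, hm⟩ < f ⟨m+1, hjv⟩ := hf (by simp [Fin.lt_def])
    have h3 := Fin.lt_def.1 h2
    simp only at h1 h3 ⊢
    omega

/-- The first-`k` index set. -/
def firstK (n k : ℕ) : Finset (Fin n) := Finset.univ.filter (fun i : Fin n => (i : ℕ) < k)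

lemma mem_firstK {k : ℕ} {i : Fin n} : i ∈ firstK n k ↔ (i : ℕ) < k := by
  simp [firstK]

lemma card_firstK {k : ℕ} (hk : k ≤ n) : (firstK n k).card = k := by
  classical
  have : firstK n k = Finset.image (Fin.castLE hk) Finset.univ := by
    ext i
    simp only [mem_firstK, Finset.mem_image, Finset.mem_univ, true_and]
    constructor
    · intro hi
      exact ⟨⟨(i : ℕ), hi⟩, by apply Fin.ext; rfl⟩
    · rintro ⟨j, rfl⟩
      simpa using j.2
  rw [this, Finset.card_image_of_injective _ (Fin.castLE_injective hk), Finset.card_univ,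
    Fintype.card_fin]

lemma topSum_of_antitone {w : Fin n →₀ ℕ} (hw : Antitone ⇑w) {k : ℕ} (hk : k ≤ n) :
    topSum k w = ∑ i ∈ firstK n k, w i := by
  apply le_antisymm
  · show (Finset.univ.powersetCard k).sup (fun S => ∑ i ∈ S, w i) ≤ _
    apply Finset.sup_le
    intro S hS
    rw [Finset.mem_powersetCard] at hS
    obtain ⟨-, hcard⟩ := hS
    have e := S.orderIsoOfFin hcard
    have hmono : StrictMono (fun j : Fin k => ((S.orderIsoOfFin hcard j : Fin n))) := by
      intro x y hxy
      exact (S.orderIsoOfFin hcard).strictMono hxy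
    have hsum1 : ∑ i ∈ S, w i = ∑ j : Fin k, w ((S.orderIsoOfFin hcard j : Fin n)) := by
      rw [← Finset.sum_attach S (fun i => w i)]
      exact Fintype.sum_equiv (S.orderIsoOfFin hcard).toEquiv.symm _ _ (by
        intro x
        simp)
    have hsum2 : ∑ i ∈ firstK n k, w i = ∑ j : Fin k, w (Fin.castLE hk j) := by
      rw [show firstK n k = Finset.image (Fin.castLE hk) Finset.univ from by
        ext i
        simp only [mem_firstK, Finset.mem_image, Finset.mem_univ, true_and]
        constructor
        · intro hi
          exact ⟨⟨(i : ℕ), hi⟩, by apply Fin.ext; rfl⟩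
        · rintro ⟨j, rfl⟩
          simpa using j.2]
      rw [Finset.sum_image (fun x _ y _ h => Fin.castLE_injective hk h)]
    rw [hsum1, hsum2]
    apply Finset.sum_le_sum
    intro j _
    apply hw
    rw [Fin.le_def]
    simpa using strictMono_fin_le _ hmono j
  · show _ ≤ (Finset.univ.powersetCard k).sup (fun S => ∑ i ∈ S, w i)
    apply Finset.le_sup (f := fun S => ∑ i ∈ S, w i)
    rw [Finset.mem_powersetCard]
    exact ⟨Finset.subset_univ _, card_firstK hk⟩

lemma topSum_mapDomain (k : ℕ) (v : Fin n →₀ ℕ) (g : Equiv.Perm (Fin n)) :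
    topSum k (Finsupp.mapDomain (⇑g) v) = topSum k v := by
  classical
  have key : ∀ (h : Equiv.Perm (Fin n)) (u : Fin n →₀ ℕ),
      topSum k (Finsupp.mapDomain (⇑h) u) ≤ topSum k u := by
    intro h u
    show (Finset.univ.powersetCard k).sup (fun S => ∑ i ∈ S, (Finsupp.mapDomain (⇑h) u) i) ≤ _
    apply Finset.sup_le
    intro S hS
    rw [Finset.mem_powersetCard] at hS
    have : ∑ i ∈ S, (Finsupp.mapDomain (⇑h) u) i = ∑ i ∈ S.image (⇑h⁻¹), u i := by
      rw [Finset.sum_image (fun x _ y _ hxy => (Equiv.injective h⁻¹) hxy)]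
      exact Finset.sum_congr rfl (fun i _ => mapDomain_perm_apply h u i)
    rw [this]
    show _ ≤ (Finset.univ.powersetCard k).sup (fun S => ∑ i ∈ S, u i)
    apply Finset.le_sup (f := fun S => ∑ i ∈ S, u i)
    rw [Finset.mem_powersetCard]
    exact ⟨Finset.subset_univ _, by
      rw [Finset.card_image_of_injective _ (Equiv.injective h⁻¹)]; exact hS.2⟩
  apply le_antisymm (key g v)
  have := key g⁻¹ (Finsupp.mapDomain (⇑g) v)
  rwa [mapDomain_mapDomain, inv_mul_cancel, Equiv.Perm.coe_one, Finsupp.mapDomain_id] at this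

lemma topSum_sortF (k : ℕ) (v : Fin n →₀ ℕ) : topSum k (sortF v) = topSum k v := by
  rw [sortF_eq_mapDomain, topSum_mapDomain]

/-- If all top-k sums of `v` are dominated by those of an antitone `s`,
then `sortF v ≤ s` in lex. -/
lemma sortF_lex_le_of_topSum {v s : Fin n →₀ ℕ} (hs : Antitone ⇑s)
    (h : ∀ k, k ≤ n → topSum k v ≤ topSum k s) : toLex (sortF v) ≤ toLex s := by
  by_contra hlt
  push_neg at hlt
  obtain ⟨i, hprefix, hi⟩ := (Finsupp.lex_def).1 hlt
  have hk : (i : ℕ) + 1 ≤ n := i.2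
  have h1 : topSum ((i:ℕ)+1) s < topSum ((i:ℕ)+1) (sortF v) := by
    rw [topSum_of_antitone hs hk, topSum_of_antitone (antitone_sortF v) hk]
    apply Finset.sum_lt_sum
    · intro j hj
      rw [mem_firstK] at hj
      rcases Nat.lt_or_ge (j : ℕ) (i : ℕ) with hji | hji
      · exact le_of_eq (hprefix j (by rwa [Fin.lt_def]))
      · have hji2 : j = i := by
          apply Fin.ext
          omega
        subst hji2
        exact le_of_lt hi
    · exact ⟨i, mem_firstK.2 (by omega), hi⟩
  rw [topSum_sortF] at h1
  exact absurd (h _ hk) (not_le.2 h1)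

end TopSum

section Delta

/-- The staircase exponent vector `δ i = n - 1 - i`. -/
noncomputable def deltaV (n : ℕ) : Fin n →₀ ℕ :=
  Finsupp.equivFunOnFinite.symm (fun i : Fin n => n - 1 - (i : ℕ))

lemma deltaV_apply (i : Fin n) : deltaV n i = n - 1 - (i : ℕ) := rfl

lemma strictAnti_deltaV : StrictAnti ⇑(deltaV n) := by
  intro i j hij
  have hi := i.2
  have hj := j.2
  have := Fin.lt_def.1 hij
  simp only [deltaV_apply]
  omega

lemma antitone_deltaV : Antitone ⇑(deltaV n) := (strictAnti_deltaV).antitone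

lemma injective_deltaV : Function.Injective ⇑(deltaV n) := (strictAnti_deltaV).injective

lemma mapDomain_deltaV_eq (g : Equiv.Perm (Fin n))
    (h : Finsupp.mapDomain (⇑g) (deltaV n) = deltaV n) : g = 1 := by
  have : ∀ a, deltaV n (g⁻¹ a) = deltaV n a := by
    intro a
    conv_rhs => rw [← h]
    rw [mapDomain_perm_apply]
  ext a
  have := injective_deltaV (this (g a))
  simp only [Equiv.Perm.inv_def, Equiv.symm_apply_apply] at this
  rw [← this]
  rfl

lemma mapDomain_inj_perm {sd : Fin n →₀ ℕ} (hinj : Function.Injective ⇑sd)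
    {g h : Equiv.Perm (Fin n)}
    (heq : Finsupp.mapDomain (⇑g) sd = Finsupp.mapDomain (⇑h) sd) : g = h := by
  ext a
  have : sd (g⁻¹ (g a)) = sd (h⁻¹ (g a)) := by
    rw [← mapDomain_perm_apply g sd (g a), ← mapDomain_perm_apply h sd (g a), heq]
  have h5 := hinj this
  simp only [Equiv.Perm.inv_def, Equiv.symm_apply_apply] at h5
  have h6 := congrArg h h5.symm
  simp only [Equiv.apply_symm_apply] at h6
  exact congrArg Fin.val h6

def idx2 (hn : 2 ≤ n) : Fin n := ⟨n - 2, by omega⟩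
def idx1 (hn : 2 ≤ n) : Fin n := ⟨n - 1, by omega⟩

lemma idx2_ne_idx1 (hn : 2 ≤ n) : idx2 hn ≠ idx1 hn := by
  simp only [idx2, idx1, ne_eq, Fin.mk.injEq]
  omega

/-- The distinguished transposition swapping the last two indices. -/
def tau (hn : 2 ≤ n) : Equiv.Perm (Fin n) := Equiv.swap (idx2 hn) (idx1 hn)

lemma tau_not_mem_alternating (hn : 2 ≤ n) :
    tau hn ∉ alternatingGroup (Fin n) := by
  rw [Equiv.Perm.mem_alternatingGroup, tau, Equiv.Perm.sign_swap (idx2_ne_idx1 hn)]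
  decide

lemma tau_sq (hn : 2 ≤ n) : tau hn * tau hn = 1 := by
  rw [tau]
  exact Equiv.swap_mul_self _ _

lemma sign_cases (g : Equiv.Perm (Fin n)) :
    g ∈ alternatingGroup (Fin n) ∨ Equiv.Perm.sign g = -1 := by
  rcases Int.units_eq_one_or (Equiv.Perm.sign g) with h | h
  · exact Or.inl (Equiv.Perm.mem_alternatingGroup.2 h)
  · exact Or.inr h

lemma mul_tau_mem (hn : 2 ≤ n) {g : Equiv.Perm (Fin n)}
    (hg : g ∉ alternatingGroup (Fin n)) : g * tau hn ∈ alternatingGroup (Fin n) := by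
  rcases sign_cases g with h | h
  · exact absurd h hg
  · rw [Equiv.Perm.mem_alternatingGroup, map_mul, h, tau,
      Equiv.Perm.sign_swap (idx2_ne_idx1 hn)]
    decide

/-- A permutation fixing everything except possibly the last two indices is `1` or `tau`. -/
lemma perm_fix_prefix (hn : 2 ≤ n) {g : Equiv.Perm (Fin n)}
    (h : ∀ a : Fin n, a ≠ idx2 hn → a ≠ idx1 hn → g a = a) :
    g = 1 ∨ g = tau hn := by
  classical
  have h2 : g (idx2 hn) = idx2 hn ∨ g (idx2 hn) = idx1 hn := by
    by_contra hc
    push_neg at hc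
    have := h (g (idx2 hn)) hc.1 hc.2
    have := Equiv.injective g this
    exact hc.1 this
  rcases h2 with h2 | h2
  · left
    have h1 : g (idx1 hn) = idx1 hn := by
      by_contra hc
      have hne2 : g (idx1 hn) ≠ idx2 hn := by
        intro hh
        exact (idx2_ne_idx1 hn) (Equiv.injective g (by rw [h2, hh]))
      have := h (g (idx1 hn)) hne2 hc
      have := Equiv.injective g this
      exact hc this
    ext a
    by_cases ha2 : a = idx2 hn
    · subst ha2; simp [h2]
    by_cases ha1 : a = idx1 hn
    · subst ha1; simp [h1]
    · simp [h a ha2 ha1]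
  · right
    have h1 : g (idx1 hn) = idx2 hn := by
      by_contra hc
      have hne1 : g (idx1 hn) ≠ idx1 hn := by
        intro hh
        exact (idx2_ne_idx1 hn) (Equiv.injective g (by rw [h2, hh]))
      have := h (g (idx1 hn)) hc hne1
      have := Equiv.injective g this
      exact hne1 this
    ext a
    by_cases ha2 : a = idx2 hn
    · subst ha2
      rw [h2, tau, Equiv.swap_apply_left]
    by_cases ha1 : a = idx1 hn
    · subst ha1
      rw [h1, tau, Equiv.swap_apply_right]
    · rw [h a ha2 ha1, tau, Equiv.swap_apply_of_ne_of_ne ha2 ha1]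

lemma strictAnti_sub_le {f : Fin n → ℕ} (hf : StrictAnti f) :
    ∀ d : ℕ, ∀ i j : Fin n, (j : ℕ) - (i : ℕ) ≤ d → i ≤ j → f j + ((j : ℕ) - (i : ℕ)) ≤ f i := by
  intro d
  induction d with
  | zero =>
    intro i j hd hij
    have : (j : ℕ) = (i : ℕ) := by
      have := Fin.le_def.1 hij
      omega
    have : i = j := Fin.ext this.symm
    subst this
    simp
  | succ m ih =>
    intro i j hd hij
    rcases eq_or_lt_of_le hij with rfl | hlt
    · simp
    · have hij' : (i : ℕ) < (j : ℕ) := Fin.lt_def.1 hlt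
      have hi1 : (i : ℕ) + 1 < n := lt_of_le_of_lt hij' j.2
      have h1 : f ⟨(i : ℕ) + 1, hi1⟩ < f i := hf (by simp [Fin.lt_def])
      have h2 : f j + ((j : ℕ) - ((⟨(i : ℕ) + 1, hi1⟩ : Fin n) : ℕ)) ≤ f ⟨(i : ℕ) + 1, hi1⟩ := by
        apply ih ⟨(i : ℕ) + 1, hi1⟩ j
        · show (j : ℕ) - ((i : ℕ) + 1) ≤ m
          omega
        · rw [Fin.le_def]
          show (i : ℕ) + 1 ≤ (j : ℕ)
          omega
      have hval : ((⟨(i : ℕ) + 1, hi1⟩ : Fin n) : ℕ) = (i : ℕ) + 1 := rfl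
      rw [hval] at h2
      omega

lemma strictAnti_ge_deltaV {sd : Fin n →₀ ℕ} (hsd : StrictAnti ⇑sd) (i : Fin n) :
    deltaV n i ≤ sd i := by
  have hn1 : n - 1 < n := by
    have := i.2
    omega
  set last : Fin n := ⟨n - 1, hn1⟩ with hlast
  have hle : i ≤ last := by
    rw [Fin.le_def]
    have := i.2
    simp only [hlast]
    omega
  have := strictAnti_sub_le hsd ((last : ℕ) - (i : ℕ)) i last le_rfl hle
  simp only [hlast, deltaV_apply] at this ⊢
  omega

end Delta

section Key

lemma toLex_add_finsupp (a b : Fin n →₀ ℕ) :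
    toLex (a + b) = toLex a + toLex b := rfl

lemma lex_lt_of_firstdiff {u w : Fin n →₀ ℕ} (i : Fin n) (hpre : ∀ d, d < i → u d = w d)
    (hi : u i < w i) : toLex u < toLex w :=
  (Finsupp.lex_def).2 ⟨i, hpre, hi⟩

variable {R : Type*} [CommSemiring R]

lemma strictAnti_of_anti_inj {sd : Fin n →₀ ℕ} (hanti : Antitone ⇑sd)
    (hinj : Function.Injective ⇑sd) : StrictAnti ⇑sd := by
  intro i j hij
  exact lt_of_le_of_ne (hanti (le_of_lt hij)) (fun h => (ne_of_lt hij) (hinj h.symm))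

/-- Key bound: a sum of a rearrangement of `lam` and one of `δ` is lex-at most `lam + δ`. -/
lemma pair_lex_le {lam : Fin n →₀ ℕ} (hlam : Antitone ⇑lam) {a b : Fin n →₀ ℕ}
    (ha : a ∈ expOrbit (⊤ : Subgroup (Equiv.Perm (Fin n))) lam)
    (hb : b ∈ expOrbit (⊤ : Subgroup (Equiv.Perm (Fin n))) (deltaV n)) :
    toLex (a + b) ≤ toLex (lam + deltaV n) := by
  obtain ⟨g, -, rfl⟩ := mem_expOrbit.1 ha
  obtain ⟨h, -, rfl⟩ := mem_expOrbit.1 hb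
  rw [toLex_add_finsupp, toLex_add_finsupp]
  exact add_le_add (lex_le_sorted hlam g) (lex_le_sorted antitone_deltaV h)

lemma pair_lex_eq {lam : Fin n →₀ ℕ} (hlam : Antitone ⇑lam) {a b : Fin n →₀ ℕ}
    (ha : a ∈ expOrbit (⊤ : Subgroup (Equiv.Perm (Fin n))) lam)
    (hb : b ∈ expOrbit (⊤ : Subgroup (Equiv.Perm (Fin n))) (deltaV n))
    (heq : a + b = lam + deltaV n) : a = lam ∧ b = deltaV n := by
  obtain ⟨g, -, hga⟩ := mem_expOrbit.1 ha
  obtain ⟨h, -, hhb⟩ := mem_expOrbit.1 hb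
  by_contra hcon
  have hlt : toLex (a + b) < toLex (lam + deltaV n) := by
    rw [not_and_or] at hcon
    rcases hcon with hc | hc
    · have h1 : toLex a < toLex lam := lex_lt_sorted hlam g hga.symm hc
      have h2 : toLex b ≤ toLex (deltaV n) := hhb ▸ lex_le_sorted antitone_deltaV h
      rw [toLex_add_finsupp, toLex_add_finsupp]
      exact add_lt_add_of_lt_of_le h1 h2
    · have h1 : toLex a ≤ toLex lam := hga ▸ lex_le_sorted hlam g
      have h2 : toLex b < toLex (deltaV n) := lex_lt_sorted antitone_deltaV h hhb.symm hc
      rw [toLex_add_finsupp, toLex_add_finsupp]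
      exact add_lt_add_of_le_of_lt h1 h2
  rw [heq] at hlt
  exact lt_irrefl _ hlt

lemma support_orbitSum_subset {G : Subgroup (Equiv.Perm (Fin n))} (e : Fin n →₀ ℕ) :
    (orbitSum G R e).support ⊆ expOrbit G e := by
  intro v hv
  rw [mem_support_iff, coeff_orbitSum] at hv
  by_contra hc
  rw [if_neg hc] at hv
  exact hv rfl

lemma expOrbit_mono {G : Subgroup (Equiv.Perm (Fin n))} (e : Fin n →₀ ℕ) :
    expOrbit G e ⊆ expOrbit (⊤ : Subgroup (Equiv.Perm (Fin n))) e := by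
  intro v hv
  obtain ⟨g, -, rfl⟩ := mem_expOrbit.1 hv
  exact mem_expOrbit.2 ⟨g, Subgroup.mem_top _, rfl⟩

section Strict

variable (hn : 2 ≤ n) {sd : Fin n →₀ ℕ} (hanti : Antitone ⇑sd) (hinj : Function.Injective ⇑sd)

/-- The coefficient of `lam + δ` in `m_lam * Z_A(δ)` is `1`. -/
lemma coeff_prod_at_top {lam : Fin n →₀ ℕ} (hlam : Antitone ⇑lam) :
    coeff (lam + deltaV n)
      (orbitSum (⊤ : Subgroup (Equiv.Perm (Fin n))) R lam *
        orbitSum (alternatingGroup (Fin n)) R (deltaV n)) = 1 := by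
  classical
  rw [coeff_mul]
  rw [Finset.sum_eq_single (lam, deltaV n)]
  · rw [coeff_orbitSum, coeff_orbitSum, if_pos (self_mem_expOrbit lam),
      if_pos (self_mem_expOrbit (deltaV n)), one_mul]
  · rintro ⟨a, b⟩ hab hne
    rw [Finset.HasAntidiagonal.mem_antidiagonal] at hab
    rw [coeff_orbitSum, coeff_orbitSum]
    by_cases ha : a ∈ expOrbit (⊤ : Subgroup (Equiv.Perm (Fin n))) lam
    · by_cases hb : b ∈ expOrbit (alternatingGroup (Fin n)) (deltaV n)
      · obtain ⟨h1, h2⟩ := pair_lex_eq hlam ha (expOrbit_mono _ hb) hab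
        exact absurd (Prod.ext h1 h2) hne
      · rw [if_neg hb, mul_zero]
    · rw [if_neg ha, zero_mul]
  · intro hne
    rw [Finset.HasAntidiagonal.mem_antidiagonal] at hne
    exact absurd rfl hne

/-- `ew` : the sorted vector with the last two entries swapped. -/
noncomputable def ew (hn : 2 ≤ n) (sd : Fin n →₀ ℕ) : Fin n →₀ ℕ :=
  Finsupp.mapDomain (⇑(tau hn)) sd

lemma ew_apply_of_ne {sd : Fin n →₀ ℕ} {d : Fin n} (hd2 : d ≠ idx2 hn) (hd1 : d ≠ idx1 hn) :
    ew hn sd d = sd d := by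
  rw [ew, mapDomain_perm_apply, tau]
  rw [Equiv.swap_inv, Equiv.swap_apply_of_ne_of_ne hd2 hd1]

lemma ew_apply_idx1 {sd : Fin n →₀ ℕ} : ew hn sd (idx1 hn) = sd (idx2 hn) := by
  rw [ew, mapDomain_perm_apply, tau, Equiv.swap_inv, Equiv.swap_apply_right]

lemma ew_apply_idx2 {sd : Fin n →₀ ℕ} : ew hn sd (idx2 hn) = sd (idx1 hn) := by
  rw [ew, mapDomain_perm_apply, tau, Equiv.swap_inv, Equiv.swap_apply_left]

lemma lt_idx2_of_ne (hn : 2 ≤ n) {d : Fin n} (hd2 : d ≠ idx2 hn) (hd1 : d ≠ idx1 hn) :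
    d < idx2 hn := by
  rw [Fin.lt_def]
  show (d : ℕ) < n - 2
  have h2 : (d : ℕ) ≠ n - 2 := fun h => hd2 (Fin.ext h)
  have h1 : (d : ℕ) ≠ n - 1 := fun h => hd1 (Fin.ext h)
  have := d.2
  omega

/-- No pair `(a, b)` from the orbits of `lam` and `δ` (alternating) sums to `ew`. -/
lemma no_pair_at_ew {lam : Fin n →₀ ℕ} (hlam : Antitone ⇑lam)
    (hsd : sd = lam + deltaV n) {a b : Fin n →₀ ℕ}
    (ha : a ∈ expOrbit (⊤ : Subgroup (Equiv.Perm (Fin n))) lam)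
    (hb : b ∈ expOrbit (alternatingGroup (Fin n)) (deltaV n))
    (heq : a + b = ew hn sd) : False := by
  classical
  obtain ⟨h, -, hha⟩ := mem_expOrbit.1 ha
  obtain ⟨g, hgA, hgb⟩ := mem_expOrbit.1 hb
  -- Step B: prefix equality
  have hpre : ∀ d : Fin n, d < idx2 hn → a d = lam d ∧ b d = deltaV n d := by
    by_contra hcon
    push_neg at hcon
    obtain ⟨d0, hd0lt, hd0⟩ := hcon
    set Sdiff : Finset (Fin n) :=
      Finset.univ.filter (fun d => ¬(a d = lam d ∧ b d = deltaV n d)) with hSdiff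
    have hd0mem : d0 ∈ Sdiff := by
      simp only [hSdiff, Finset.mem_filter, Finset.mem_univ, true_and]
      exact fun hcon2 => hd0 hcon2.1 hcon2.2
    have hne : Sdiff.Nonempty := ⟨d0, hd0mem⟩
    set i0 := Sdiff.min' hne with hi0
    have hi0lt : i0 < idx2 hn := lt_of_le_of_lt (Finset.min'_le _ _ hd0mem) hd0lt
    have hi0pre : ∀ d : Fin n, d < i0 → a d = lam d ∧ b d = deltaV n d := by
      intro d hd
      by_contra hc
      have : d ∈ Sdiff := by
        simp only [hSdiff, Finset.mem_filter, Finset.mem_univ, true_and]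
        exact hc
      exact absurd (Finset.min'_le _ _ this) (not_le.2 hd)
    have hi0mem : ¬(a i0 = lam i0 ∧ b i0 = deltaV n i0) := by
      have hmm : i0 ∈ Sdiff := Finset.min'_mem Sdiff hne
      rw [hSdiff, Finset.mem_filter] at hmm
      exact hmm.2
    have hai0 : a i0 ≤ lam i0 := by
      by_contra hc
      push_neg at hc
      have : toLex lam < toLex a :=
        lex_lt_of_firstdiff i0 (fun d hd => ((hi0pre d hd).1).symm) hc
      have h2 : toLex a ≤ toLex lam := hha ▸ lex_le_sorted hlam h
      exact absurd h2 (not_le.2 this)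
    have hbi0 : b i0 ≤ deltaV n i0 := by
      by_contra hc
      push_neg at hc
      have : toLex (deltaV n) < toLex b :=
        lex_lt_of_firstdiff i0 (fun d hd => ((hi0pre d hd).2).symm) hc
      have h2 : toLex b ≤ toLex (deltaV n) := hgb ▸ lex_le_sorted antitone_deltaV g
      exact absurd h2 (not_le.2 this)
    have hsum : (a + b) i0 < sd i0 := by
      rw [Finsupp.add_apply, hsd, Finsupp.add_apply]
      rcases Classical.em (a i0 = lam i0) with he | he
      · have hbs : b i0 < deltaV n i0 :=
          lt_of_le_of_ne hbi0 (fun hh => hi0mem ⟨he, hh⟩)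
        omega
      · have has : a i0 < lam i0 := lt_of_le_of_ne hai0 he
        omega
    rw [heq] at hsum
    have hne2 : i0 ≠ idx2 hn := ne_of_lt hi0lt
    have hne1 : i0 ≠ idx1 hn := by
      intro hh
      rw [hh] at hi0lt
      have := Fin.lt_def.1 hi0lt
      simp only [idx1, idx2] at this
      omega
    rw [ew_apply_of_ne hn hne2 hne1] at hsum
    exact lt_irrefl _ hsum
  -- Step C: b = deltaV n
  have hgfix : ∀ d : Fin n, d ≠ idx2 hn → d ≠ idx1 hn → g⁻¹ d = d := by
    intro d hd2 hd1
    have hdlt := lt_idx2_of_ne hn hd2 hd1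
    have := (hpre d hdlt).2
    rw [← hgb] at this
    rw [mapDomain_perm_apply] at this
    exact injective_deltaV this
  have hg1 : g = 1 := by
    rcases perm_fix_prefix hn hgfix with hh | hh
    · have : g = 1 := by
        have := congrArg Inv.inv hh
        simpa using this
      exact this
    · exfalso
      have hgtau : g = (tau hn)⁻¹ := by
        have := congrArg Inv.inv hh
        simpa using this
      rw [tau, Equiv.swap_inv, ← tau] at hgtau
      rw [hgtau] at hgA
      exact tau_not_mem_alternating hn hgA
  have hbd : b = deltaV n := by
    rw [← hgb, hg1, Equiv.Perm.coe_one, Finsupp.mapDomain_id]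
  -- Step D: a idx1 = lam idx2 + 1
  have hd1val : deltaV n (idx1 hn) = 0 := by
    rw [deltaV_apply]
    simp only [idx1]
    omega
  have hd2val : deltaV n (idx2 hn) = 1 := by
    rw [deltaV_apply]
    simp only [idx2]
    omega
  have haidx1 : a (idx1 hn) = lam (idx2 hn) + 1 := by
    have := DFunLike.congr_fun heq (idx1 hn)
    simp only [Finsupp.add_apply] at this
    rw [hbd, hd1val, ew_apply_idx1, hsd, Finsupp.add_apply, hd2val] at this
    omega
  -- Step E: counting contradiction
  set c := lam (idx2 hn) + 1 with hc
  set P : (Fin n → ℕ) → Finset (Fin n) :=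
    (fun f => Finset.univ.filter (fun d => f d = c)) with hP
  have hcnt : (P ⇑a).card = (P ⇑lam).card := by
    apply Finset.card_bij' (fun d _ => h⁻¹ d) (fun d _ => h d)
    · intro d hd
      simp only [hP, Finset.mem_filter, Finset.mem_univ, true_and] at hd ⊢
      rw [← hd, ← hha, mapDomain_perm_apply]
    · intro d hd
      simp only [hP, Finset.mem_filter, Finset.mem_univ, true_and] at hd ⊢
      rw [← hha, mapDomain_perm_apply]
      simpa using hd
    · intro d _
      simp
    · intro d _
      simp
  have hsplit : ∀ f : Fin n → ℕ,
      ((P f).filter (fun d => d < idx2 hn)).card +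
        ((P f).filter (fun d => ¬ d < idx2 hn)).card = (P f).card := by
    intro f
    exact Finset.card_filter_add_card_filter_not _
  have hlow : (P ⇑a).filter (fun d => d < idx2 hn) =
      (P ⇑lam).filter (fun d => d < idx2 hn) := by
    ext d
    simp only [hP, Finset.mem_filter, Finset.mem_univ, true_and]
    constructor
    · rintro ⟨h1, h2⟩
      exact ⟨by rw [← (hpre d h2).1]; exact h1, h2⟩
    · rintro ⟨h1, h2⟩
      exact ⟨by rw [(hpre d h2).1]; exact h1, h2⟩
  have hhigh_lam : (P ⇑lam).filter (fun d => ¬ d < idx2 hn) = ∅ := by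
    rw [Finset.eq_empty_iff_forall_notMem]
    intro d hd
    simp only [hP, Finset.mem_filter, Finset.mem_univ, true_and, not_lt] at hd
    obtain ⟨h1, h2⟩ := hd
    have : lam d ≤ lam (idx2 hn) := hlam h2
    omega
  have hhigh_a : idx1 hn ∈ (P ⇑a).filter (fun d => ¬ d < idx2 hn) := by
    simp only [hP, Finset.mem_filter, Finset.mem_univ, true_and, not_lt]
    constructor
    · exact haidx1
    · rw [Fin.le_def]
      show n - 2 ≤ n - 1
      omega
  have h1 := hsplit ⇑a
  have h2 := hsplit ⇑lam
  rw [hlow] at h1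
  rw [hhigh_lam, Finset.card_empty] at h2
  have : ((P ⇑a).filter (fun d => ¬ d < idx2 hn)).card = 0 := by omega
  rw [Finset.card_eq_zero] at this
  rw [this] at hhigh_a
  exact absurd hhigh_a (Finset.notMem_empty _)

/-- The coefficient of `ew` in `m_lam * Z_A(δ)` is `0`. -/
lemma coeff_prod_at_ew {lam : Fin n →₀ ℕ} (hlam : Antitone ⇑lam)
    (hsd : sd = lam + deltaV n) :
    coeff (ew hn sd)
      (orbitSum (⊤ : Subgroup (Equiv.Perm (Fin n))) R lam *
        orbitSum (alternatingGroup (Fin n)) R (deltaV n)) = 0 := by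
  classical
  rw [coeff_mul]
  apply Finset.sum_eq_zero
  rintro ⟨a, b⟩ hab
  rw [Finset.HasAntidiagonal.mem_antidiagonal] at hab
  rw [coeff_orbitSum, coeff_orbitSum]
  by_cases ha : a ∈ expOrbit (⊤ : Subgroup (Equiv.Perm (Fin n))) lam
  · by_cases hb : b ∈ expOrbit (alternatingGroup (Fin n)) (deltaV n)
    · exact absurd hab (fun hh => no_pair_at_ew hn hlam hsd ha hb hh)
    · rw [if_neg hb, mul_zero]
  · rw [if_neg ha, zero_mul]

/-- For strictly decreasing `sd`, `ew` is not in the alternating orbit of `sd`. -/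
lemma ew_not_mem_alt (hinj : Function.Injective ⇑sd) : ew hn sd ∉ expOrbit (alternatingGroup (Fin n)) sd := by
  intro hmem
  obtain ⟨g, hgA, hg⟩ := mem_expOrbit.1 hmem
  have : g = tau hn := mapDomain_inj_perm hinj (by rw [hg, ew])
  rw [this] at hgA
  exact tau_not_mem_alternating hn hgA

lemma ew_ne_sd (hinj : Function.Injective ⇑sd) : ew hn sd ≠ sd := by
  intro hmem
  have : tau hn = 1 := mapDomain_inj_perm hinj (by
    rw [show Finsupp.mapDomain (⇑(tau hn)) sd = ew hn sd from rfl, hmem,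
      Equiv.Perm.coe_one, Finsupp.mapDomain_id])
  have h2 := congrFun (congrArg (fun g : Equiv.Perm (Fin n) => ⇑g) this) (idx2 hn)
  simp only [tau, Equiv.swap_apply_left, Equiv.Perm.coe_one, id_eq] at h2
  exact idx2_ne_idx1 hn h2.symm

lemma expOrbit_top_split (v : Fin n →₀ ℕ) :
    v ∈ expOrbit (⊤ : Subgroup (Equiv.Perm (Fin n))) sd ↔
      v ∈ expOrbit (alternatingGroup (Fin n)) sd ∨
        v ∈ expOrbit (alternatingGroup (Fin n)) (ew hn sd) := by
  constructor
  · intro hv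
    obtain ⟨h, -, rfl⟩ := mem_expOrbit.1 hv
    rcases sign_cases h with hA | hodd
    · exact Or.inl (mem_expOrbit.2 ⟨h, hA, rfl⟩)
    · right
      refine mem_expOrbit.2 ⟨h * tau hn, mul_tau_mem hn (fun hmem => ?_), ?_⟩
      · rw [Equiv.Perm.mem_alternatingGroup] at hmem
        rw [hmem] at hodd
        exact absurd hodd (by decide)
      · rw [ew, mapDomain_mapDomain, mul_assoc, tau_sq, mul_one]
  · intro hv
    rcases hv with hv | hv
    · exact expOrbit_mono _ hv
    · obtain ⟨g, -, rfl⟩ := mem_expOrbit.1 hv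
      rw [ew, mapDomain_mapDomain]
      exact mem_expOrbit.2 ⟨g * tau hn, Subgroup.mem_top _, rfl⟩

end Strict

/-- For a vector with a repeated entry, the full orbit equals the alternating orbit. -/
lemma expOrbit_top_eq_alt_of_repeat {sd : Fin n →₀ ℕ} {i j : Fin n} (hij : i ≠ j)
    (hval : sd i = sd j) :
    expOrbit (⊤ : Subgroup (Equiv.Perm (Fin n))) sd =
      expOrbit (alternatingGroup (Fin n)) sd := by
  have hswap : Finsupp.mapDomain (⇑(Equiv.swap i j)) sd = sd := by
    ext a
    rw [mapDomain_perm_apply, Equiv.swap_inv]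
    rcases Classical.em (a = i) with rfl | hai
    · rw [Equiv.swap_apply_left, hval]
    rcases Classical.em (a = j) with rfl | haj
    · rw [Equiv.swap_apply_right, hval]
    · rw [Equiv.swap_apply_of_ne_of_ne hai haj]
  apply Finset.Subset.antisymm
  · intro v hv
    obtain ⟨h, -, rfl⟩ := mem_expOrbit.1 hv
    rcases sign_cases h with hA | hodd
    · exact mem_expOrbit.2 ⟨h, hA, rfl⟩
    · refine mem_expOrbit.2 ⟨h * Equiv.swap i j, ?_, ?_⟩
      · rw [Equiv.Perm.mem_alternatingGroup, map_mul, hodd, Equiv.Perm.sign_swap hij]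
        decide
      · rw [← mapDomain_mapDomain, hswap]
  · exact expOrbit_mono _

/-- Members of the full orbit of an antitone vector sort back to it. -/
lemma sortF_of_mem_orbit {sd v : Fin n →₀ ℕ} (hanti : Antitone ⇑sd)
    (hv : v ∈ expOrbit (⊤ : Subgroup (Equiv.Perm (Fin n))) sd) : sortF v = sd := by
  obtain ⟨g, -, rfl⟩ := mem_expOrbit.1 hv
  exact sortF_eq_of_antitone hanti g rfl

lemma mem_orbit_of_sortF {sd v : Fin n →₀ ℕ} (hanti : Antitone ⇑sd)
    (hsv : sortF v = sd) : v ∈ expOrbit (⊤ : Subgroup (Equiv.Perm (Fin n))) sd := by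
  have h1 : sortF v = sortF sd := by rw [hsv, sortF_antitone_self hanti]
  obtain ⟨g, rfl⟩ := sortF_eq_iff_orbit.1 h1
  exact mem_expOrbit.2 ⟨g, Subgroup.mem_top _, rfl⟩

/-- The `lam` for a strictly decreasing `sd`. -/
lemma lam_spec {sd : Fin n →₀ ℕ} (hanti : Antitone ⇑sd) (hinj : Function.Injective ⇑sd) :
    Antitone ⇑(sd - deltaV n) ∧ (sd - deltaV n) + deltaV n = sd := by
  have hstrict := strictAnti_of_anti_inj hanti hinj
  have hge : ∀ i : Fin n, deltaV n i ≤ sd i := strictAnti_ge_deltaV hstrict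
  constructor
  · intro i j hij
    have h1 : sd j + ((j : ℕ) - (i : ℕ)) ≤ sd i := strictAnti_sub_le hstrict _ i j le_rfl hij
    have h2 := Fin.le_def.1 hij
    have h3 := j.2
    rw [Finsupp.tsub_apply, Finsupp.tsub_apply, deltaV_apply, deltaV_apply]
    omega
  · ext a
    rw [Finsupp.add_apply, Finsupp.tsub_apply]
    have := hge a
    omega

/-- All support elements of `m_lam * Z_A(δ)` sort lex-at-most `sd`. -/
lemma supp_prod_sort_le {R : Type*} [CommSemiring R] {sd lam : Fin n →₀ ℕ}
    (hanti : Antitone ⇑sd) (hlam : Antitone ⇑lam) (hsd : sd = lam + deltaV n)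
    {v : Fin n →₀ ℕ}
    (hv : v ∈ (orbitSum (⊤ : Subgroup (Equiv.Perm (Fin n))) R lam *
      orbitSum (alternatingGroup (Fin n)) R (deltaV n)).support) :
    toLex (sortF v) ≤ toLex sd := by
  classical
  have hsub := MvPolynomial.support_mul (orbitSum (⊤ : Subgroup (Equiv.Perm (Fin n))) R lam)
    (orbitSum (alternatingGroup (Fin n)) R (deltaV n))
  have hv2 := hsub hv
  rw [Finset.mem_add] at hv2
  obtain ⟨a, ha, b, hb, rfl⟩ := hv2
  have ha2 := support_orbitSum_subset (R := R) lam ha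
  have hb2 := expOrbit_mono (deltaV n) (support_orbitSum_subset (R := R) (deltaV n) hb)
  obtain ⟨g, -, hga⟩ := mem_expOrbit.1 ha2
  obtain ⟨h, -, hhb⟩ := mem_expOrbit.1 hb2
  apply sortF_lex_le_of_topSum hanti
  intro k hk
  have h1 : topSum k (a + b) ≤ topSum k a + topSum k b := topSum_add_le k a b
  have hta : topSum k a = topSum k lam := by rw [← hga, topSum_mapDomain]
  have htb : topSum k b = topSum k (deltaV n) := by rw [← hhb, topSum_mapDomain]
  rw [hta, htb, topSum_of_antitone hlam hk, topSum_of_antitone antitone_deltaV hk] at h1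
  rw [topSum_of_antitone hanti hk, hsd]
  rw [← Finset.sum_add_distrib] at h1
  refine le_trans h1 (le_of_eq (Finset.sum_congr rfl (fun i _ => ?_)))
  rw [Finsupp.add_apply]

end Key

section Main

variable {R : Type*} [CommRing R]

lemma permInvariant_of_symmetric {G : Subgroup (Equiv.Perm (Fin n))}
    {f : MvPolynomial (Fin n) R} (hf : f.IsSymmetric) : PermInvariant G f :=
  fun g _ => hf g

lemma permInvariant_sub {G : Subgroup (Equiv.Perm (Fin n))}
    {f g : MvPolynomial (Fin n) R} (hf : PermInvariant G f) (hg : PermInvariant G g) :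
    PermInvariant G (f - g) := by
  intro e he
  rw [map_sub, hf e he, hg e he]

lemma permInvariant_mul {G : Subgroup (Equiv.Perm (Fin n))}
    {f g : MvPolynomial (Fin n) R} (hf : PermInvariant G f) (hg : PermInvariant G g) :
    PermInvariant G (f * g) := by
  intro e he
  rw [map_mul, hf e he, hg e he]

lemma permInvariant_C_mul {G : Subgroup (Equiv.Perm (Fin n))}
    (c : R) {f : MvPolynomial (Fin n) R} (hf : PermInvariant G f) :
    PermInvariant G (C c * f) := by
  intro e he
  rw [map_mul, rename_C, hf e he]

lemma isSymmetric_C (c : R) : (C c : MvPolynomial (Fin n) R).IsSymmetric :=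
  fun e => by rw [rename_C]

lemma support_sub' (f g : MvPolynomial (Fin n) R) {v : Fin n →₀ ℕ}
    (hv : v ∈ (f - g).support) : v ∈ f.support ∨ v ∈ g.support := by
  rw [MvPolynomial.mem_support_iff] at hv ⊢
  rw [MvPolynomial.mem_support_iff]
  by_contra hc
  push_neg at hc
  rw [coeff_sub, hc.1, hc.2, sub_zero] at hv
  exact hv rfl

lemma support_add' (f g : MvPolynomial (Fin n) R) {v : Fin n →₀ ℕ}
    (hv : v ∈ (f + g).support) : v ∈ f.support ∨ v ∈ g.support := by
  rw [MvPolynomial.mem_support_iff] at hv ⊢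
  rw [MvPolynomial.mem_support_iff]
  by_contra hc
  push_neg at hc
  rw [coeff_add, hc.1, hc.2, add_zero] at hv
  exact hv rfl

lemma support_C_mul' (c : R) (f : MvPolynomial (Fin n) R) {v : Fin n →₀ ℕ}
    (hv : v ∈ (C c * f).support) : v ∈ f.support := by
  rw [MvPolynomial.mem_support_iff] at hv ⊢
  rw [coeff_C_mul] at hv
  intro hc
  rw [hc, mul_zero] at hv
  exact hv rfl

/-- The decomposition property. -/
def DecompProp (hn : 2 ≤ n) (f : MvPolynomial (Fin n) R) : Prop :=
  ∃ c1 c2 : MvPolynomial (Fin n) R, c1.IsSymmetric ∧ c2.IsSymmetric ∧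
    f = c1 + c2 * orbitSum (alternatingGroup (Fin n)) R (deltaV n)

lemma decompProp_add {hn : 2 ≤ n} {f g : MvPolynomial (Fin n) R}
    (hf : DecompProp hn f) (hg : DecompProp hn g) : DecompProp hn (f + g) := by
  obtain ⟨a1, a2, ha1, ha2, hfa⟩ := hf
  obtain ⟨b1, b2, hb1, hb2, hgb⟩ := hg
  exact ⟨a1 + b1, a2 + b2, ha1.add hb1, ha2.add hb2, by rw [hfa, hgb]; ring⟩

lemma decompProp_zero {hn : 2 ≤ n} : DecompProp hn (0 : MvPolynomial (Fin n) R) :=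
  ⟨0, 0, MvPolynomial.IsSymmetric.zero, MvPolynomial.IsSymmetric.zero, by ring⟩

/-- Packaging the inductive step. -/
lemma decomp_of_reduction {hn : 2 ≤ n} {s : Lex (Fin n →₀ ℕ)}
    (IH : ∀ t, t < s → ∀ h : MvPolynomial (Fin n) R,
      PermInvariant (alternatingGroup (Fin n)) h →
      (∀ v ∈ h.support, toLex (sortF v) ≤ t) → DecompProp hn h)
    {f g : MvPolynomial (Fin n) R} {s' : Lex (Fin n →₀ ℕ)} (hs'le : s' ≤ s)
    (hdinv : PermInvariant (alternatingGroup (Fin n)) (f - g))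
    (hgdec : DecompProp hn g)
    (hlt : ∀ v ∈ (f - g).support, toLex (sortF v) < s') :
    DecompProp hn f := by
  classical
  have hfsplit : f = (f - g) + g := by ring
  by_cases hf0 : f - g = 0
  · rw [hfsplit, hf0, zero_add]
    exact hgdec
  · have hne : ((f - g).support.image (fun v => toLex (sortF v))).Nonempty := by
      apply Finset.Nonempty.image
      rw [Finset.nonempty_iff_ne_empty]
      intro hc
      exact hf0 (MvPolynomial.support_eq_empty.1 hc)
    set s'' := ((f - g).support.image (fun v => toLex (sortF v))).max' hne with hs''
    have hs''lt : s'' < s' := by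
      rw [hs'', Finset.max'_lt_iff]
      intro y hy
      obtain ⟨v, hv, rfl⟩ := Finset.mem_image.1 hy
      exact hlt v hv
    have hdec := IH s'' (lt_of_lt_of_le hs''lt hs'le) (f - g) hdinv (by
      intro v hv
      exact Finset.le_max' ((f - g).support.image (fun v => toLex (sortF v))) _
        (Finset.mem_image_of_mem _ hv))
    rw [hfsplit]
    exact decompProp_add hdec hgdec

lemma symmetric_orbitSum_top (e : Fin n →₀ ℕ) :
    (orbitSum (⊤ : Subgroup (Equiv.Perm (Fin n))) R e).IsSymmetric :=
  orbitSum_top_symmetric R e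

/-- Main existence lemma, by well-founded induction on the lex-largest sorted support vector. -/
lemma exists_decomp_bound (hn : 2 ≤ n) :
    ∀ s : Lex (Fin n →₀ ℕ), ∀ f : MvPolynomial (Fin n) R,
      PermInvariant (alternatingGroup (Fin n)) f →
      (∀ v ∈ f.support, toLex (sortF v) ≤ s) → DecompProp hn f := by
  intro s
  induction s using WellFoundedLT.induction with
  | _ s IH =>
  intro f hf hbound
  classical
  by_cases hf0 : f = 0
  · rw [hf0]
    exact decompProp_zero
  have hne : (f.support.image (fun v => toLex (sortF v))).Nonempty := by
    apply Finset.Nonempty.image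
    rw [Finset.nonempty_iff_ne_empty]
    intro hc
    exact hf0 (MvPolynomial.support_eq_empty.1 hc)
  set s' := (f.support.image (fun v => toLex (sortF v))).max' hne with hs'
  have hs'le : s' ≤ s := by
    apply Finset.max'_le
    intro y hy
    obtain ⟨v, hv, rfl⟩ := Finset.mem_image.1 hy
    exact hbound v hv
  have hles' : ∀ v ∈ f.support, toLex (sortF v) ≤ s' := by
    intro v hv
    exact Finset.le_max' (f.support.image (fun v => toLex (sortF v))) _
      (Finset.mem_image_of_mem _ hv)
  obtain ⟨v0, hv0supp, hv0⟩ : ∃ v0 ∈ f.support, toLex (sortF v0) = s' := by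
    have := Finset.max'_mem _ hne
    rw [← hs'] at this
    obtain ⟨v, hv, hveq⟩ := Finset.mem_image.1 this
    exact ⟨v, hv, hveq⟩
  set sd := sortF v0 with hsd
  have hanti : Antitone ⇑sd := antitone_sortF v0
  have hsortsd : ∀ v : Fin n →₀ ℕ, toLex (sortF v) = s' ↔ sortF v = sd := by
    intro v
    rw [← hv0]
    exact ⟨fun h => toLex.injective h, fun h => by rw [h]⟩
  by_cases hinj : Function.Injective ⇑sd
  · -- strict case
    obtain ⟨hlamanti, hlamsum⟩ := lam_spec hanti hinj
    set lam := sd - deltaV n with hlam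
    have hsdlam : sd = lam + deltaV n := hlamsum.symm
    set M1 := orbitSum (⊤ : Subgroup (Equiv.Perm (Fin n))) R sd with hM1
    set M2 := orbitSum (⊤ : Subgroup (Equiv.Perm (Fin n))) R lam *
      orbitSum (alternatingGroup (Fin n)) R (deltaV n) with hM2
    set cp := coeff sd f with hcp
    set cm := coeff (ew hn sd) f with hcm
    set g := C cm * M1 + C (cp - cm) * M2 with hg
    have hM2inv : PermInvariant (alternatingGroup (Fin n)) M2 :=
      permInvariant_mul (permInvariant_of_symmetric (symmetric_orbitSum_top lam))
        (orbitSum_invariant R (deltaV n))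
    have hginv : PermInvariant (alternatingGroup (Fin n)) g := by
      intro e he
      rw [hg, map_add]
      rw [permInvariant_C_mul cm (permInvariant_of_symmetric (symmetric_orbitSum_top sd)) e he]
      rw [permInvariant_C_mul (cp - cm) hM2inv e he]
    -- coefficient of f - g vanishes on the whole orbit of sd
    have hzero : ∀ v : Fin n →₀ ℕ, sortF v = sd → coeff v (f - g) = 0 := by
      intro v hv
      have hvorb : v ∈ expOrbit (⊤ : Subgroup (Equiv.Perm (Fin n))) sd :=
        mem_orbit_of_sortF hanti hv
      have hcoefg : coeff v M1 = 1 := by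
        rw [hM1, coeff_orbitSum, if_pos hvorb]
      have hM2sd : coeff sd M2 = 1 := by
        rw [hM2, hsdlam]
        exact coeff_prod_at_top hlamanti
      have hM2ew : coeff (ew hn sd) M2 = 0 := coeff_prod_at_ew hn hlamanti hsdlam
      rw [coeff_sub, hg, coeff_add, coeff_C_mul, coeff_C_mul, hcoefg]
      rcases (expOrbit_top_split hn v).1 hvorb with hplus | hminus
      · obtain ⟨e, heA, hev⟩ := mem_expOrbit.1 hplus
        have h1 : coeff v f = cp := by
          rw [← hev, hcp]
          exact coeff_invariant hf heA sd
        have h2 : coeff v M2 = 1 := by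
          rw [← hev, coeff_invariant hM2inv heA sd]
          exact hM2sd
        rw [h1, h2]
        ring
      · obtain ⟨e, heA, hev⟩ := mem_expOrbit.1 hminus
        have h1 : coeff v f = cm := by
          rw [← hev, hcm]
          exact coeff_invariant hf heA (ew hn sd)
        have h2 : coeff v M2 = 0 := by
          rw [← hev, coeff_invariant hM2inv heA (ew hn sd)]
          exact hM2ew
        rw [h1, h2]
        ring
    have hlt : ∀ v ∈ (f - g).support, toLex (sortF v) < s' := by
      intro v hv
      have hvne : ¬ (sortF v = sd) := by
        intro hc
        rw [MvPolynomial.mem_support_iff] at hv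
        exact hv (hzero v hc)
      have hvle : toLex (sortF v) ≤ s' := by
        rcases support_sub' f g hv with h1 | h1
        · exact hles' v h1
        · rw [hg] at h1
          rcases support_add' _ _ h1 with h3 | h3
          · have h4 := support_orbitSum_subset (R := R) sd (support_C_mul' _ _ h3)
            rw [← hv0]
            rw [sortF_of_mem_orbit hanti h4]
          · have h4 := support_C_mul' _ _ h3
            rw [← hv0]
            exact supp_prod_sort_le hanti hlamanti hsdlam h4
      exact lt_of_le_of_ne hvle (fun hc => hvne ((hsortsd v).1 hc))
    have hgdec : DecompProp hn g := by
      refine ⟨C cm * M1, C (cp - cm) * orbitSum (⊤ : Subgroup (Equiv.Perm (Fin n))) R lam,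
        (isSymmetric_C cm).mul (symmetric_orbitSum_top sd),
        (isSymmetric_C (cp - cm)).mul (symmetric_orbitSum_top lam), by rw [hg, hM2]; ring⟩
    exact decomp_of_reduction IH hs'le (permInvariant_sub hf hginv) hgdec hlt
  · -- repeat case
    have hrep : ∃ i j : Fin n, i ≠ j ∧ sd i = sd j := by
      rw [Function.not_injective_iff] at hinj
      obtain ⟨i, j, hij, hne2⟩ := hinj
      exact ⟨i, j, hne2, hij⟩
    obtain ⟨i, j, hij, hval⟩ := hrep
    set c := coeff sd f with hc
    set g := C c * orbitSum (⊤ : Subgroup (Equiv.Perm (Fin n))) R sd with hg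
    have hginv : PermInvariant (alternatingGroup (Fin n)) g :=
      permInvariant_C_mul c (permInvariant_of_symmetric (symmetric_orbitSum_top sd))
    have hzero : ∀ v : Fin n →₀ ℕ, sortF v = sd → coeff v (f - g) = 0 := by
      intro v hv
      have hvorb : v ∈ expOrbit (⊤ : Subgroup (Equiv.Perm (Fin n))) sd :=
        mem_orbit_of_sortF hanti hv
      have hvalt : v ∈ expOrbit (alternatingGroup (Fin n)) sd := by
        rw [← expOrbit_top_eq_alt_of_repeat hij hval]
        exact hvorb
      obtain ⟨e, heA, hev⟩ := mem_expOrbit.1 hvalt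
      have h1 : coeff v f = c := by
        rw [← hev, hc]
        exact coeff_invariant hf heA sd
      rw [coeff_sub, hg, coeff_C_mul, coeff_orbitSum, if_pos hvorb, h1]
      ring
    have hlt : ∀ v ∈ (f - g).support, toLex (sortF v) < s' := by
      intro v hv
      have hvne : ¬ (sortF v = sd) := by
        intro hc
        rw [MvPolynomial.mem_support_iff] at hv
        exact hv (hzero v hc)
      have hvle : toLex (sortF v) ≤ s' := by
        rcases support_sub' f g hv with h1 | h1
        · exact hles' v h1
        · rw [hg] at h1
          have h4 := support_orbitSum_subset (R := R) sd (support_C_mul' _ _ h1)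
          rw [← hv0]
          rw [sortF_of_mem_orbit hanti h4]
      exact lt_of_le_of_ne hvle (fun hcon => hvne ((hsortsd v).1 hcon))
    have hgdec : DecompProp hn g :=
      ⟨g, 0, (isSymmetric_C c).mul (symmetric_orbitSum_top sd), MvPolynomial.IsSymmetric.zero,
        by ring⟩
    exact decomp_of_reduction IH hs'le (permInvariant_sub hf hginv) hgdec hlt

/-- Existence, no bound. -/
lemma exists_decomp (hn : 2 ≤ n) (f : MvPolynomial (Fin n) R)
    (hf : PermInvariant (alternatingGroup (Fin n)) f) : DecompProp hn f := by
  apply exists_decomp_bound hn (f.support.sup (fun v => toLex (sortF v))) f hf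
  intro v hv
  exact Finset.le_sup (f := fun v => toLex (sortF v)) hv

set_option maxHeartbeats 1000000 in
lemma coeff_rename_tau_orbitSum (hn : 2 ≤ n) :
    coeff (deltaV n) (rename (⇑(tau hn))
      (orbitSum (alternatingGroup (Fin n)) R (deltaV n))) = 0 := by
  have h1 : deltaV n = Finsupp.mapDomain (⇑(tau hn)) (Finsupp.mapDomain (⇑(tau hn)) (deltaV n)) := by
    rw [mapDomain_mapDomain, tau_sq, Equiv.Perm.coe_one, Finsupp.mapDomain_id]
  have h2 : coeff (deltaV n) (rename (⇑(tau hn))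
      (orbitSum (alternatingGroup (Fin n)) R (deltaV n))) =
      coeff (Finsupp.mapDomain (⇑(tau hn)) (deltaV n))
        (orbitSum (alternatingGroup (Fin n)) R (deltaV n)) := by
    have h0 := coeff_rename_mapDomain (⇑(tau hn)) (Equiv.injective (tau hn))
      (orbitSum (alternatingGroup (Fin n)) R (deltaV n))
      (Finsupp.mapDomain (⇑(tau hn)) (deltaV n))
    rw [← h1] at h0
    exact h0
  rw [h2, coeff_orbitSum, if_neg]
  intro hmem
  obtain ⟨g, hgA, hg⟩ := mem_expOrbit.1 hmem
  have h3 : g = tau hn := mapDomain_inj_perm injective_deltaV hg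
  rw [h3] at hgA
  exact tau_not_mem_alternating hn hgA

lemma orbitSum_sub_rename_ne_zero (hn : 2 ≤ n) [Nontrivial R] :
    orbitSum (alternatingGroup (Fin n)) R (deltaV n) -
      rename (⇑(tau hn)) (orbitSum (alternatingGroup (Fin n)) R (deltaV n)) ≠ 0 := by
  intro hc
  have h1 : coeff (deltaV n) (orbitSum (alternatingGroup (Fin n)) R (deltaV n) -
      rename (⇑(tau hn)) (orbitSum (alternatingGroup (Fin n)) R (deltaV n))) = 1 := by
    rw [coeff_sub, coeff_orbitSum, if_pos (self_mem_expOrbit _),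
      coeff_rename_tau_orbitSum hn, sub_zero]
  rw [hc] at h1
  simp only [coeff_zero] at h1
  exact (zero_ne_one (α := R)) h1

lemma decomp_unique (hn : 2 ≤ n) [IsDomain R] {A1 B1 A2 B2 : MvPolynomial (Fin n) R}
    (h1 : A1.IsSymmetric) (h2 : B1.IsSymmetric) (h3 : A2.IsSymmetric) (h4 : B2.IsSymmetric)
    (heq : A1 + B1 * orbitSum (alternatingGroup (Fin n)) R (deltaV n) =
      A2 + B2 * orbitSum (alternatingGroup (Fin n)) R (deltaV n)) :
    A1 = A2 ∧ B1 = B2 := by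
  set Z := orbitSum (alternatingGroup (Fin n)) R (deltaV n) with hZ
  have hD : (B1 - B2) * Z = A2 - A1 := by linear_combination heq
  have hR := congrArg (rename (⇑(tau hn))) hD
  rw [map_mul, map_sub, map_sub, h2 (tau hn), h4 (tau hn), h3 (tau hn), h1 (tau hn), ← hD] at hR
  have hfac : (B1 - B2) * (Z - rename (⇑(tau hn)) Z) = 0 := by linear_combination -hR
  rcases mul_eq_zero.1 hfac with hB | hZZ
  · have hBB : B1 = B2 := by linear_combination hB
    constructor
    · have := heq
      rw [hBB] at this
      exact add_right_cancel this
    · exact hBB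
  · exact absurd hZZ (orbitSum_sub_rename_ne_zero hn)

end Main

theorem stmt17_final (n : ℕ) (hn : 2 ≤ n) (p : ℕ) (hp : p.Prime)
    (f : MvPolynomial (Fin n) (ZMod p)) (hf : PermInvariant (alternatingGroup (Fin n)) f) :
    ∃! c : MvPolynomial (Fin n) (ZMod p) × MvPolynomial (Fin n) (ZMod p),
      (c.1.IsSymmetric ∧ c.2.IsSymmetric) ∧
      f = c.1 + c.2 * map (Int.castRingHom (ZMod p))
          (orbitSum (alternatingGroup (Fin n)) ℤ
            (Finsupp.equivFunOnFinite.symm fun i : Fin n => n - 1 - (i : ℕ))) := by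
  haveI : Fact p.Prime := ⟨hp⟩
  have hδ : (Finsupp.equivFunOnFinite.symm fun i : Fin n => n - 1 - (i : ℕ)) = deltaV n := rfl
  have hmap : map (Int.castRingHom (ZMod p))
      (orbitSum (alternatingGroup (Fin n)) ℤ
        (Finsupp.equivFunOnFinite.symm fun i : Fin n => n - 1 - (i : ℕ))) =
      orbitSum (alternatingGroup (Fin n)) (ZMod p) (deltaV n) := by
    rw [hδ, map_orbitSum]
  obtain ⟨c1, c2, hc1, hc2, hfeq⟩ := exists_decomp hn f hf
  refine ⟨(c1, c2), ⟨⟨hc1, hc2⟩, by rw [hmap]; exact hfeq⟩, ?_⟩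
  rintro ⟨d1, d2⟩ ⟨⟨hd1, hd2⟩, hdeq⟩
  rw [hmap] at hdeq
  have := decomp_unique hn hd1 hd2 hc1 hc2 (by rw [← hdeq, ← hfeq])
  exact Prod.ext this.1 this.2

end Stmt17

/-- For `n ≥ 2`, with `m = ∏_{i=1}^{n−1} x_i^{n−i}` and `Z(m)` its
`A_n`-orbit sum, for every prime `p` one has
`𝔽_p[x]^{A_n} = 𝔽_p[x]^{S_n} ⊕ 𝔽_p[x]^{S_n}·Z(m)‾`: every `A_n`-invariant polynomial over
`𝔽_p` is uniquely `c_1 + c_2·Z(m)‾` with `c_1, c_2` symmetric.  In particular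
`𝔽_p[x]^{A_n}` is a free `𝔽_p[x]^{S_n}`-module of rank 2 for every prime `p`. -/
theorem stmt17 (n : ℕ) (hn : 2 ≤ n) (p : ℕ) (hp : p.Prime)
    (f : MvPolynomial (Fin n) (ZMod p)) (hf : PermInvariant (alternatingGroup (Fin n)) f) :
    ∃! c : MvPolynomial (Fin n) (ZMod p) × MvPolynomial (Fin n) (ZMod p),
      (c.1.IsSymmetric ∧ c.2.IsSymmetric) ∧
      f = c.1 + c.2 * map (Int.castRingHom (ZMod p))
          (orbitSum (alternatingGroup (Fin n)) ℤ
            (Finsupp.equivFunOnFinite.symm fun i : Fin n => n - 1 - (i : ℕ))) := by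
  exact Stmt17.stmt17_final n hn p hp f hf
end
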